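/- arXiv:2306.07844 — 13 statements merged into one kernel-verified Lean document; each statement's English description precedes it below -/
import Mathlib

section
/- Let P ⊆ ℕ be ω-closed with 0 ∈ P and with at least two elements, and let ε be an injective endomorphism of the semigroup B_ω^𝓕 (𝓕 = {[p) : p ∈ P}). Then ε is the identity map if and only if there exists an element (i,j,p) ∈ B_ω^𝓕 with (i,j,p) ∉ {(0,0,0), (0,0,1)} such that ε(i,j,p) = (i,j,p). (Theorem 2.4) -/
/-- A set `P ⊆ ℕ` of left endpoints encodes an ω-closed family
`𝓕 = {[p) : p ∈ P}` of nonempty inductive subsets of ω iff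
`max p₁ (p₂ ∸ n) ∈ P` for all `p₁, p₂ ∈ P` and `n ∈ ℕ`. -/
def OmegaClosed (P : Set ℕ) : Prop :=
  ∀ p₁ ∈ P, ∀ p₂ ∈ P, ∀ n : ℕ, max p₁ (p₂ - n) ∈ P

/-- The multiplication of the semigroup `B_ω^𝓕` on triples `(i, j, p)`:
`(i₁,j₁,p₁)·(i₂,j₂,p₂) = (i₁ + (i₂ ∸ j₁), j₂ + (j₁ ∸ i₂), max (p₁ ∸ (i₂ ∸ j₁)) (p₂ ∸ (j₁ ∸ i₂)))`
(the third coordinate records `(j₁ - i₂ + [p₁)) ∩ [p₂)` etc.). -/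
def bmul (x y : ℕ × ℕ × ℕ) : ℕ × ℕ × ℕ :=
  (x.1 + (y.1 - x.2.1), y.2.1 + (x.2.1 - y.1),
    max (x.2.2 - (y.1 - x.2.1)) (y.2.2 - (x.2.1 - y.1)))

/-- The carrier of `B_ω^𝓕`: triples whose third coordinate lies in `P`. -/
def BF (P : Set ℕ) : Set (ℕ × ℕ × ℕ) := {x | x.2.2 ∈ P}

/-- `ε` is an endomorphism of the semigroup `B_ω^𝓕`. -/
def IsEndo (P : Set ℕ) (ε : ℕ × ℕ × ℕ → ℕ × ℕ × ℕ) : Prop :=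
  (∀ x ∈ BF P, ε x ∈ BF P) ∧
    ∀ x ∈ BF P, ∀ y ∈ BF P, ε (bmul x y) = bmul (ε x) (ε y)

lemma bmul_mk (i1 j1 p1 i2 j2 p2 : ℕ) :
    bmul (i1, j1, p1) (i2, j2, p2) =
      (i1 + (i2 - j1), j2 + (j1 - i2), max (p1 - (i2 - j1)) (p2 - (j1 - i2))) := rfl

set_option linter.unnecessarySeqFocus false in
/-- **Theorem 2.4.** Let `P ⊆ ℕ` be ω-closed with `0 ∈ P` and at least two elements,
and let `ε` be an injective endomorphism of `B_ω^𝓕`.  Then `ε` is the identity map iff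
there is an element `(i,j,p) ∈ B_ω^𝓕 \ {(0,0,0), (0,0,1)}` with `ε (i,j,p) = (i,j,p)`. -/
theorem identity_iff_fixed_point (P : Set ℕ) (hP : OmegaClosed P) (h0 : 0 ∈ P)
    (hP2 : P.Nontrivial) (ε : ℕ × ℕ × ℕ → ℕ × ℕ × ℕ)
    (hend : IsEndo P ε) (hinj : Set.InjOn ε (BF P)) :
    (∀ x ∈ BF P, ε x = x) ↔
      ∃ i j p : ℕ, p ∈ P ∧ ((i, j, p) : ℕ × ℕ × ℕ) ≠ (0, 0, 0) ∧
        ((i, j, p) : ℕ × ℕ × ℕ) ≠ (0, 0, 1) ∧ ε (i, j, p) = (i, j, p) := by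
  constructor
  · intro h
    exact ⟨1, 0, 0, h0, by simp, by simp, h (1, 0, 0) h0⟩
  · rintro ⟨i0, j0, p0, hp0, hne0, hne1, hfix⟩
    have hBF : ∀ {i j p : ℕ}, p ∈ P → ((i, j, p) : ℕ × ℕ × ℕ) ∈ BF P := fun hp => hp
    have hmul := hend.2
    have hdc : ∀ p ∈ P, ∀ q, q ≤ p → q ∈ P := by
      intro p hp q hq
      have h := hP 0 h0 p hp (p - q)
      have hh : max 0 (p - (p - q)) = q := by omega
      rwa [hh] at h
    have h1P : (1 : ℕ) ∈ P := by
      obtain ⟨x, hx, y, hy, hxy⟩ := hP2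
      rcases Nat.eq_zero_or_pos x with rfl | hx1
      · exact hdc y hy 1 (by omega)
      · exact hdc x hx 1 hx1
    -- Step 1 : the idempotents (i0,i0,p0) and (j0,j0,p0) are fixed by ε
    rcases hV : ε (j0, i0, p0) with ⟨v1, v2, v3⟩
    have hfixI : ε (i0, i0, p0) = (i0, i0, p0) := by
      rcases hE : ε (i0, i0, p0) with ⟨k1, k2, k3⟩
      have tid := hmul (i0, i0, p0) (hBF hp0) (i0, i0, p0) (hBF hp0)
      rw [show bmul (i0, i0, p0) (i0, i0, p0) = (i0, i0, p0) by
        simp only [bmul_mk, Prod.mk.injEq, true_and, and_true] <;> omega, hE] at tid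
      have t1 := hmul (i0, i0, p0) (hBF hp0) (i0, j0, p0) (hBF hp0)
      rw [show bmul (i0, i0, p0) (i0, j0, p0) = (i0, j0, p0) by
        simp only [bmul_mk, Prod.mk.injEq, true_and, and_true] <;> omega, hfix, hE] at t1
      have t2 := hmul (i0, j0, p0) (hBF hp0) (j0, i0, p0) (hBF hp0)
      rw [show bmul (i0, j0, p0) (j0, i0, p0) = (i0, i0, p0) by
        simp only [bmul_mk, Prod.mk.injEq, true_and, and_true] <;> omega, hfix, hE, hV] at t2
      simp only [bmul_mk, Prod.mk.injEq, true_and, and_true] at tid t1 t2 ⊢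
      omega
    have hfixJ : ε (j0, j0, p0) = (j0, j0, p0) := by
      rcases hE : ε (j0, j0, p0) with ⟨l1, l2, l3⟩
      have tid := hmul (j0, j0, p0) (hBF hp0) (j0, j0, p0) (hBF hp0)
      rw [show bmul (j0, j0, p0) (j0, j0, p0) = (j0, j0, p0) by
        simp only [bmul_mk, Prod.mk.injEq, true_and, and_true] <;> omega, hE] at tid
      have t1 := hmul (i0, j0, p0) (hBF hp0) (j0, j0, p0) (hBF hp0)
      rw [show bmul (i0, j0, p0) (j0, j0, p0) = (i0, j0, p0) by
        simp only [bmul_mk, Prod.mk.injEq, true_and, and_true] <;> omega, hfix, hE] at t1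
      have t2 := hmul (j0, i0, p0) (hBF hp0) (i0, j0, p0) (hBF hp0)
      rw [show bmul (j0, i0, p0) (i0, j0, p0) = (j0, j0, p0) by
        simp only [bmul_mk, Prod.mk.injEq, true_and, and_true] <;> omega, hfix, hE, hV] at t2
      simp only [bmul_mk, Prod.mk.injEq, true_and, and_true] at tid t1 t2 ⊢
      omega
    -- a fixed idempotent (c,c,p0) with c ≥ 1 or (c = 0 and p0 ≥ 2)
    obtain ⟨c, hcfix, hcase⟩ :
        ∃ c, ε (c, c, p0) = (c, c, p0) ∧ (1 ≤ c ∨ (c = 0 ∧ 2 ≤ p0)) := by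
      rcases Nat.eq_zero_or_pos i0 with rfl | hi
      · rcases Nat.eq_zero_or_pos j0 with rfl | hj
        · refine ⟨0, hfixI, Or.inr ⟨rfl, ?_⟩⟩
          have hne0' : p0 ≠ 0 := fun h => hne0 (by simp [h])
          have hne1' : p0 ≠ 1 := fun h => hne1 (by simp [h])
          omega
        · exact ⟨j0, hfixJ, Or.inl hj⟩
      · exact ⟨i0, hfixI, Or.inl hi⟩
    -- Step 2 : ε fixes the identity (0,0,0)
    have he : ε (0, 0, 0) = (0, 0, 0) := by
      have hcP : ((c, c, p0) : ℕ × ℕ × ℕ) ∈ BF P := hBF hp0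
      have hTBF : {x : ℕ × ℕ × ℕ | x.2.2 ∈ P ∧ bmul x (c, c, p0) = (c, c, p0) ∧
          bmul (c, c, p0) x = (c, c, p0)} ⊆ BF P := fun x hx => hx.1
      have hTfin : ({x : ℕ × ℕ × ℕ | x.2.2 ∈ P ∧ bmul x (c, c, p0) = (c, c, p0) ∧
          bmul (c, c, p0) x = (c, c, p0)}).Finite := by
        apply Set.Finite.subset
          ((Set.finite_Iic c).prod ((Set.finite_Iic c).prod (Set.finite_Iic (c + p0))))
        rintro ⟨x1, x2, x3⟩ ⟨-, hx1, hx2⟩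
        simp only [bmul_mk, Prod.mk.injEq, true_and, and_true] at hx1 hx2
        simp only [Set.mem_prod, Set.mem_Iic]
        omega
      have hmaps : Set.MapsTo ε
          {x : ℕ × ℕ × ℕ | x.2.2 ∈ P ∧ bmul x (c, c, p0) = (c, c, p0) ∧
            bmul (c, c, p0) x = (c, c, p0)}
          {x : ℕ × ℕ × ℕ | x.2.2 ∈ P ∧ bmul x (c, c, p0) = (c, c, p0) ∧
            bmul (c, c, p0) x = (c, c, p0)} := by
        rintro x ⟨hxP, hx1, hx2⟩
        refine ⟨hend.1 x hxP, ?_, ?_⟩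
        · have t := hmul x hxP (c, c, p0) hcP
          rw [hx1, hcfix] at t
          exact t.symm
        · have t := hmul (c, c, p0) hcP x hxP
          rw [hx2, hcfix] at t
          exact t.symm
      have hsurj := ((hTfin.injOn_iff_bijOn_of_mapsTo hmaps).1 (hinj.mono hTBF)).surjOn
      have heT : ((0, 0, 0) : ℕ × ℕ × ℕ) ∈
          {x : ℕ × ℕ × ℕ | x.2.2 ∈ P ∧ bmul x (c, c, p0) = (c, c, p0) ∧
            bmul (c, c, p0) x = (c, c, p0)} := by
        refine ⟨h0, ?_, ?_⟩ <;> · simp only [bmul_mk, Prod.mk.injEq, true_and, and_true] <;> omega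
      obtain ⟨⟨w1, w2, w3⟩, hwT, hwe⟩ := hsurj heT
      have t := hmul (w1, w2, w3) (hTBF hwT) (0, 0, 0) (hBF h0)
      rw [show bmul (w1, w2, w3) (0, 0, 0) = (w1, w2, w3) by
        simp only [bmul_mk, Prod.mk.injEq, true_and, and_true] <;> omega, hwe] at t
      rcases hE0 : ε (0, 0, 0) with ⟨a1, a2, a3⟩
      rw [hE0] at t
      simp only [bmul_mk, Prod.mk.injEq, true_and, and_true] at t ⊢
      omega
    -- Step 3 : ε (0,1,0) = (0,m,0) and ε (1,0,0) = (m,0,0)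
    rcases hA : ε (0, 1, 0) with ⟨u1, u2, u3⟩
    rcases hB : ε (1, 0, 0) with ⟨w1, w2, w3⟩
    have tab := hmul (0, 1, 0) (hBF h0) (1, 0, 0) (hBF h0)
    rw [show bmul (0, 1, 0) (1, 0, 0) = (0, 0, 0) by
      simp only [bmul_mk, Prod.mk.injEq, true_and, and_true] <;> omega, he, hA, hB] at tab
    simp only [bmul_mk, Prod.mk.injEq, true_and, and_true] at tab
    obtain ⟨hu1, hu3, hw2, hw3, hw1⟩ : u1 = 0 ∧ u3 = 0 ∧ w2 = 0 ∧ w3 = 0 ∧ u2 = w1 := by omega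
    subst hu1 hu3 hw2 hw3 hw1
    have hm1 : 1 ≤ u2 := by
      rcases Nat.eq_zero_or_pos u2 with rfl | h
      · exfalso
        have h01 : ((0, 1, 0) : ℕ × ℕ × ℕ) = (0, 0, 0) :=
          hinj (hBF h0) (hBF h0) (hA.trans he.symm)
        simp at h01
      · exact h
    -- powers of the generators
    have hbpow : ∀ k : ℕ, ε (k, 0, 0) = (k * u2, 0, 0) := by
      intro k; induction k with
      | zero => simpa using he
      | succ n ih =>
        have t := hmul (1, 0, 0) (hBF h0) (n, 0, 0) (hBF h0)
        rw [show bmul (1, 0, 0) (n, 0, 0) = (n + 1, 0, 0) by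
          simp only [bmul_mk, Prod.mk.injEq, true_and, and_true] <;> omega, hB, ih] at t
        rw [t]
        simp only [bmul_mk, Prod.mk.injEq, add_one_mul, true_and, and_true] <;> omega
    have hapow : ∀ k : ℕ, ε (0, k, 0) = (0, k * u2, 0) := by
      intro k; induction k with
      | zero => simpa using he
      | succ n ih =>
        have t := hmul (0, n, 0) (hBF h0) (0, 1, 0) (hBF h0)
        rw [show bmul (0, n, 0) (0, 1, 0) = (0, n + 1, 0) by
          simp only [bmul_mk, Prod.mk.injEq, true_and, and_true] <;> omega, hA, ih] at t
        rw [t]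
        simp only [bmul_mk, Prod.mk.injEq, add_one_mul, true_and, and_true] <;> omega
    -- Step 4 : m = 1
    have hm : u2 = 1 := by
      rcases hcase with hc1 | ⟨rfl, hp2⟩
      · have hcc : ε (c, c, 0) = (c * u2, c * u2, 0) := by
          have t := hmul (c, 0, 0) (hBF h0) (0, c, 0) (hBF h0)
          rw [show bmul (c, 0, 0) (0, c, 0) = (c, c, 0) by
            simp only [bmul_mk, Prod.mk.injEq, true_and, and_true] <;> omega, hbpow, hapow] at t
          rw [t]
          simp only [bmul_mk, Prod.mk.injEq, true_and, and_true] <;> omega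
        have t := hmul (c, c, p0) (hBF hp0) (c, c, 0) (hBF h0)
        rw [show bmul (c, c, p0) (c, c, 0) = (c, c, p0) by
          simp only [bmul_mk, Prod.mk.injEq, true_and, and_true] <;> omega, hcfix, hcc] at t
        have hle : c ≤ c * u2 := Nat.le_mul_of_pos_right c hm1
        simp only [bmul_mk, Prod.mk.injEq, true_and, and_true] at t
        have hcm : c * u2 = c * 1 := by omega
        exact Nat.eq_of_mul_eq_mul_left hc1 hcm
      · -- c = 0, p0 ≥ 2
        have hchain : ∀ k : ℕ, ε (0, 0, p0 - k) = (0, 0, p0 - k * u2) := by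
          intro k; induction k with
          | zero => simpa using hcfix
          | succ n ih =>
            have hnP : p0 - n ∈ P := hdc p0 hp0 _ (Nat.sub_le _ _)
            have hn1P : p0 - (n + 1) ∈ P := hdc p0 hp0 _ (Nat.sub_le _ _)
            have t1 := hmul (0, 0, p0 - n) (hBF hnP) (1, 0, 0) (hBF h0)
            rw [show bmul (0, 0, p0 - n) (1, 0, 0) = (1, 0, p0 - (n + 1)) by
              simp only [bmul_mk, Prod.mk.injEq, true_and, and_true] <;> omega, ih, hB] at t1
            have t2 := hmul (0, 1, 0) (hBF h0) (1, 0, p0 - (n + 1)) (hBF hn1P)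
            rw [show bmul (0, 1, 0) (1, 0, p0 - (n + 1)) = (0, 0, p0 - (n + 1)) by
              simp only [bmul_mk, Prod.mk.injEq, true_and, and_true] <;> omega] at t2
            rw [hA, t1] at t2
            rw [t2]
            simp only [bmul_mk, Prod.mk.injEq, add_one_mul, true_and, and_true] <;> omega
        by_contra hne
        have h2 : 2 ≤ u2 := by omega
        have hkey : p0 ≤ (p0 - 1) * u2 := by
          calc p0 ≤ (p0 - 1) * 2 := by omega
          _ ≤ (p0 - 1) * u2 := Nat.mul_le_mul (le_refl _) h2
        have e1 := hchain (p0 - 1)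
        rw [show p0 - (p0 - 1) = 1 by omega, show p0 - (p0 - 1) * u2 = 0 by omega] at e1
        have hcontr : ((0, 0, 1) : ℕ × ℕ × ℕ) = (0, 0, 0) :=
          hinj (hBF h1P) (hBF h0) (e1.trans he.symm)
        simp at hcontr
    subst hm
    -- Step 5 : ε fixes every (0,0,p) and (1,1,p)
    have h11 : ∀ p, p ∈ P → ε (0, 0, p) = (0, 0, p) → ε (1, 1, p) = (1, 1, p) := by
      intro p hp h00p
      have t1 := hmul (0, 0, p) (hBF hp) (0, 1, 0) (hBF h0)
      rw [show bmul (0, 0, p) (0, 1, 0) = (0, 1, p) by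
        simp only [bmul_mk, Prod.mk.injEq, true_and, and_true] <;> omega] at t1
      rw [h00p, hA] at t1
      rw [show bmul (0, 0, p) (0, 1, 0) = (0, 1, p) by
        simp only [bmul_mk, Prod.mk.injEq, true_and, and_true] <;> omega] at t1
      have t2 := hmul (1, 0, 0) (hBF h0) (0, 1, p) (hBF hp)
      rw [show bmul (1, 0, 0) (0, 1, p) = (1, 1, p) by
        simp only [bmul_mk, Prod.mk.injEq, true_and, and_true] <;> omega] at t2
      rw [hB, t1] at t2
      rw [show bmul (1, 0, 0) (0, 1, p) = (1, 1, p) by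
        simp only [bmul_mk, Prod.mk.injEq, true_and, and_true] <;> omega] at t2
      exact t2
    have h00 : ∀ p, p ∈ P → ε (0, 0, p) = (0, 0, p) := by
      intro p
      induction p with
      | zero => intro _; exact he
      | succ n ih =>
        intro hp1
        have hn : n ∈ P := hdc _ hp1 _ (by omega)
        have ih0 := ih hn
        rcases hD : ε (0, 0, n + 1) with ⟨d1, d2, d3⟩
        have tid := hmul (0, 0, n + 1) (hBF hp1) (0, 0, n + 1) (hBF hp1)
        rw [show bmul (0, 0, n + 1) (0, 0, n + 1) = (0, 0, n + 1) by
          simp only [bmul_mk, Prod.mk.injEq, true_and, and_true] <;> omega, hD] at tid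
        have t1 := hmul (0, 0, n + 1) (hBF hp1) (1, 0, 0) (hBF h0)
        rw [show bmul (0, 0, n + 1) (1, 0, 0) = (1, 0, n) by
          simp only [bmul_mk, Prod.mk.injEq, true_and, and_true] <;> omega, hD, hB] at t1
        have t2 := hmul (0, 1, 0) (hBF h0) (1, 0, n) (hBF hn)
        rw [show bmul (0, 1, 0) (1, 0, n) = (0, 0, n) by
          simp only [bmul_mk, Prod.mk.injEq, true_and, and_true] <;> omega, ih0, hA, t1] at t2
        simp only [bmul_mk, Prod.mk.injEq, true_and, and_true] at tid t2
        have hd21 : d2 = d1 := by omega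
        by_cases hd1 : d1 = 0
        · by_cases hd3 : d3 = 0
          · exfalso
            have heq : ε ((0, 0, n + 1) : ℕ × ℕ × ℕ) = ε (0, 0, 0) := by
              rw [hD, he]
              simp only [Prod.mk.injEq]
              omega
            have hc2 : ((0, 0, n + 1) : ℕ × ℕ × ℕ) = (0, 0, 0) :=
              hinj (hBF hp1) (hBF h0) heq
            simp at hc2
          · simp only [Prod.mk.injEq]
            omega
        · exfalso
          have h11n := h11 n hn ih0
          have heq : ε ((0, 0, n + 1) : ℕ × ℕ × ℕ) = ε (1, 1, n) := by
            rw [hD, h11n]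
            simp only [Prod.mk.injEq]
            omega
          have hc2 : ((0, 0, n + 1) : ℕ × ℕ × ℕ) = (1, 1, n) :=
            hinj (hBF hp1) (hBF hn) heq
          simp at hc2
    -- Step 6 : ε is the identity
    have hcol : ∀ j p, p ∈ P → ε (0, j, p) = (0, j, p) := by
      intro j
      induction j with
      | zero => exact h00
      | succ n ih =>
        intro p hp
        have t := hmul (0, n, p) (hBF hp) (0, 1, 0) (hBF h0)
        rw [show bmul (0, n, p) (0, 1, 0) = (0, n + 1, p) by
          simp only [bmul_mk, Prod.mk.injEq, true_and, and_true] <;> omega] at t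
        rw [ih p hp, hA] at t
        rw [show bmul (0, n, p) (0, 1, 0) = (0, n + 1, p) by
          simp only [bmul_mk, Prod.mk.injEq, true_and, and_true] <;> omega] at t
        exact t
    have hall : ∀ i j p, p ∈ P → ε (i, j, p) = (i, j, p) := by
      intro i
      induction i with
      | zero => exact hcol
      | succ n ih =>
        intro j p hp
        have t := hmul (1, 0, 0) (hBF h0) (n, j, p) (hBF hp)
        rw [show bmul (1, 0, 0) (n, j, p) = (n + 1, j, p) by
          simp only [bmul_mk, Prod.mk.injEq, true_and, and_true] <;> omega] at t
        rw [hB, ih j p hp] at t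
        rw [show bmul (1, 0, 0) (n, j, p) = (n + 1, j, p) by
          simp only [bmul_mk, Prod.mk.injEq, true_and, and_true] <;> omega] at t
        exact t
    rintro ⟨i, j, p⟩ hx
    exact hall i j p hx
end

section
/- Let P ⊆ ℕ be ω-closed with 0 ∈ P and with at least two elements, and let ε be an injective endomorphism of the semigroup B_ω^𝓕 (𝓕 = {[p) : p ∈ P}). Then the following conditions are equivalent: (i) ε is the identity map; (ii) there exists a non-idempotent element (i,j,p) ∈ B_ω^𝓕 (i.e. with i ≠ j) such that ε(i,j,p) = (i,j,p); (iii) ε has at least three distinct fixed points. (Theorem 2.5) -/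
lemma maxadd (a b : ℕ) : max a b = a + (b - a) := by
  rcases le_total a b with h | h
  · rw [max_eq_right h]; omega
  · rw [max_eq_left h]; omega

/-- Structure of an injective endomorphism: there are maps `M`, `c` and a slope
`k ≥ 1` such that `ε (a, b, q) = (M q + a * k, M q + b * k, c q)` on `B_ω^𝓕`. -/
lemma bform {P : Set ℕ} (h0 : 0 ∈ P)
    {ε : ℕ × ℕ × ℕ → ℕ × ℕ × ℕ} (hend : IsEndo P ε) (hinj : Set.InjOn ε (BF P)) :
    ∃ M c : ℕ → ℕ, ∃ k : ℕ, 1 ≤ k ∧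
      ∀ q ∈ P, ∀ a b : ℕ, ε (a, b, q) = (M q + a * k, M q + b * k, c q) := by
  have mem : ∀ (a b : ℕ) {q : ℕ}, q ∈ P → ((a, b, q) : ℕ × ℕ × ℕ) ∈ BF P :=
    fun _ _ _ hq => hq
  have hmul := hend.2
  -- idempotents go to idempotents
  have idem : ∀ a : ℕ, ∀ q ∈ P, ε (a, a, q) = ((ε (a,a,q)).1, (ε (a,a,q)).1, (ε (a,a,q)).2.2) := by
    intro a q hq
    have h := hmul (a,a,q) (mem a a hq) (a,a,q) (mem a a hq)
    rw [show bmul (a,a,q) (a,a,q) = (a,a,q) by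
      simp only [bmul, Prod.mk.injEq, maxadd, true_and, and_true]; omega] at h
    rcases hE : ε (a,a,q) with ⟨A,B,C⟩
    simp only [hE, bmul, Prod.mk.injEq, maxadd, true_and, and_true] at h ⊢
    omega
  -- general form on elements
  have core : ∀ q ∈ P, ∀ a b : ℕ,
      ε (a,b,q) = ((ε (a,a,q)).1, (ε (b,b,q)).1, (ε (a,a,q)).2.2) ∧
      (ε (a,a,q)).2.2 = (ε (b,b,q)).2.2 := by
    intro q hq a b
    have hE1 := idem a q hq
    have hE2 := idem b q hq
    have h1 := hmul (a,a,q) (mem a a hq) (a,b,q) (mem a b hq)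
    have h2 := hmul (a,b,q) (mem a b hq) (b,b,q) (mem b b hq)
    have h3 := hmul (a,b,q) (mem a b hq) (b,a,q) (mem b a hq)
    have h4 := hmul (b,a,q) (mem b a hq) (a,b,q) (mem a b hq)
    rw [show bmul (a,a,q) (a,b,q) = (a,b,q) by
      simp only [bmul, Prod.mk.injEq, maxadd, true_and, and_true]; omega] at h1
    rw [show bmul (a,b,q) (b,b,q) = (a,b,q) by
      simp only [bmul, Prod.mk.injEq, maxadd, true_and, and_true]; omega] at h2
    rw [show bmul (a,b,q) (b,a,q) = (a,a,q) by
      simp only [bmul, Prod.mk.injEq, maxadd, true_and, and_true]; omega] at h3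
    rw [show bmul (b,a,q) (a,b,q) = (b,b,q) by
      simp only [bmul, Prod.mk.injEq, maxadd, true_and, and_true]; omega] at h4
    rcases hZ : ε (a,b,q) with ⟨A,B,C⟩
    rcases hZ' : ε (b,a,q) with ⟨A',B',C'⟩
    rcases hm1 : ε (a,a,q) with ⟨m1,m1',c1⟩
    rcases hm2 : ε (b,b,q) with ⟨m2,m2',c2⟩
    simp only [hm1, Prod.mk.injEq, true_and, and_true] at hE1
    simp only [hm2, Prod.mk.injEq, true_and, and_true] at hE2
    simp only [hZ, hZ', hm1, hm2, bmul, Prod.mk.injEq, maxadd, true_and, and_true]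
      at h1 h2 h3 h4 ⊢
    omega
  -- recursion along the shift (0,1,0)
  have hrec : ∀ q ∈ P, ∀ b : ℕ,
      (ε ((0:ℕ),(0:ℕ),(0:ℕ))).1 ≤ (ε (b,b,q)).1 ∧
      (ε (b+1,b+1,q)).1
        = (ε ((1:ℕ),(1:ℕ),(0:ℕ))).1 + ((ε (b,b,q)).1 - (ε ((0:ℕ),(0:ℕ),(0:ℕ))).1) := by
    intro q hq b
    have h := hmul (b,b,q) (mem b b hq) (0,1,0) (mem 0 1 h0)
    rw [show bmul (b,b,q) (0,1,0) = (b,b+1,q) by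
      simp only [bmul, Prod.mk.injEq, maxadd, true_and, and_true]; omega] at h
    have hZ := (core q hq b (b+1)).1
    have hS := (core 0 h0 0 1).1
    rw [hZ, hS, idem b q hq] at h
    simp only [bmul, Prod.mk.injEq, maxadd, true_and, and_true] at h
    omega
  -- distinct idempotents have distinct first coordinates
  have hne : ∀ q ∈ P, ∀ b : ℕ, (ε (b,b,q)).1 ≠ (ε (b+1,b+1,q)).1 := by
    intro q hq b h
    have h3 := (core q hq b (b+1)).2
    have := hinj (mem b b hq) (mem (b+1) (b+1) hq)
      (by rw [idem b q hq, idem (b+1) q hq, h, h3])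
    simp only [Prod.mk.injEq, true_and, and_true] at this
    omega
  -- the step k is positive
  have hk : (ε ((0:ℕ),(0:ℕ),(0:ℕ))).1 < (ε ((1:ℕ),(1:ℕ),(0:ℕ))).1 := by
    by_contra hvu
    push_neg at hvu
    have hdec : ∀ b : ℕ, (ε (b,b,(0:ℕ))).1 + b ≤ (ε ((0:ℕ),(0:ℕ),(0:ℕ))).1 := by
      intro b
      induction b with
      | zero => simp
      | succ n IH =>
        have h1 := hrec 0 h0 n
        have h2 := hne 0 h0 n
        omega
    have := hdec ((ε ((0:ℕ),(0:ℕ),(0:ℕ))).1 + 1)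
    omega
  refine ⟨fun q => (ε (0,0,q)).1, fun q => (ε (0,0,q)).2.2,
    (ε ((1:ℕ),(1:ℕ),(0:ℕ))).1 - (ε ((0:ℕ),(0:ℕ),(0:ℕ))).1, by omega, ?_⟩
  intro q hq a b
  have mrec : ∀ n : ℕ, (ε (n,n,q)).1
      = (ε ((0:ℕ),(0:ℕ),q)).1 + n * ((ε ((1:ℕ),(1:ℕ),(0:ℕ))).1 - (ε ((0:ℕ),(0:ℕ),(0:ℕ))).1) := by
    intro n
    induction n with
    | zero => simp
    | succ m IH =>
      have h1 := hrec q hq m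
      have h2 := (hrec q hq m).2
      have : (m+1) * ((ε ((1:ℕ),(1:ℕ),(0:ℕ))).1 - (ε ((0:ℕ),(0:ℕ),(0:ℕ))).1)
          = m * ((ε ((1:ℕ),(1:ℕ),(0:ℕ))).1 - (ε ((0:ℕ),(0:ℕ),(0:ℕ))).1)
            + ((ε ((1:ℕ),(1:ℕ),(0:ℕ))).1 - (ε ((0:ℕ),(0:ℕ),(0:ℕ))).1) := by ring
      omega
  have h := (core q hq a b).1
  have h3 := (core q hq a 0).2
  rw [h, mrec a, mrec b, h3]

/-- **Theorem 2.5.** For an injective endomorphism `ε` of `B_ω^𝓕` (`P` ω-closed, `0 ∈ P`,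
`P` with at least two elements) the following are equivalent:
(i) `ε` is the identity; (ii) `ε` fixes some non-idempotent element `(i,j,p)` (`i ≠ j`);
(iii) `ε` has at least three distinct fixed points. -/
theorem identity_iff_nonidempotent_fixed_iff_three_fixed (P : Set ℕ) (hP : OmegaClosed P)
    (h0 : 0 ∈ P) (hP2 : P.Nontrivial) (ε : ℕ × ℕ × ℕ → ℕ × ℕ × ℕ)
    (hend : IsEndo P ε) (hinj : Set.InjOn ε (BF P)) :
    ((∀ x ∈ BF P, ε x = x) ↔
      ∃ i j p : ℕ, p ∈ P ∧ i ≠ j ∧ ε (i, j, p) = (i, j, p)) ∧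
    ((∀ x ∈ BF P, ε x = x) ↔
      ∃ x ∈ BF P, ∃ y ∈ BF P, ∃ z ∈ BF P,
        x ≠ y ∧ x ≠ z ∧ y ≠ z ∧ ε x = x ∧ ε y = y ∧ ε z = z) := by
  obtain ⟨M, c, k, hk, hform⟩ := bform h0 hend hinj
  have mem : ∀ (a b : ℕ) {q : ℕ}, q ∈ P → ((a, b, q) : ℕ × ℕ × ℕ) ∈ BF P :=
    fun _ _ _ hq => hq
  have Pdc : ∀ q ∈ P, ∀ t : ℕ, q - t ∈ P := by
    intro q hq t
    have h := hP 0 h0 q hq t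
    rwa [show max 0 (q - t) = q - t by omega] at h
  -- products of idempotents
  have prodI : ∀ q ∈ P, ∀ r ∈ P, ∀ t : ℕ,
      M (max (q - t) r) + t * k = max (M q) (M r + t * k) ∧
      c (max (q - t) r)
        = max (c q - ((M r + t * k) - M q)) (c r - (M q - (M r + t * k))) := by
    intro q hq r hr t
    have hQ : max (q - t) r ∈ P := by have := hP r hr q hq t; rwa [max_comm] at this
    have h := hend.2 (0,0,q) (mem 0 0 hq) (t,t,r) (mem t t hr)
    rw [show bmul (0,0,q) (t,t,r) = (t, t, max (q - t) r) by
      simp only [bmul, Prod.mk.injEq, maxadd, true_and, and_true]; omega] at h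
    rw [hform _ hQ t t, hform q hq 0 0, hform r hr t t] at h
    simp only [bmul, Prod.mk.injEq] at h
    exact ⟨by omega, by omega⟩
  have cinj0 : ∀ q ∈ P, ∀ q' ∈ P, c q = c q' → M q = M q' → q = q' := by
    intro q hq q' hq' hc hM
    have h := hinj (mem 0 0 hq) (mem 0 0 hq')
      (by rw [hform q hq 0 0, hform q' hq' 0 0, hc, hM])
    simp only [Prod.mk.injEq, true_and, and_true] at h
    omega
  -- the key lemma: slope 1 plus one strongly fixed level forces the identity
  have key : ∀ p ∈ P, k = 1 → M p = 0 → c p = p → ∀ x ∈ BF P, ε x = x := by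
    intro p hp hk1 hMp hcp
    subst hk1
    simp only [mul_one] at hform prodI
    have cinj1 : ∀ q ∈ P, ∀ q' ∈ P, c q = c q' → q = q' := by
      intro q hq q' hq' hc
      have h := hinj (mem (M q') (M q') hq) (mem (M q) (M q) hq')
        (by rw [hform q hq (M q') (M q'), hform q' hq' (M q) (M q), hc]
            simp only [Prod.mk.injEq, true_and, and_true]
            omega)
      simp only [Prod.mk.injEq, true_and, and_true] at h
      omega
    have hM0 : M 0 = 0 := by
      have h := (prodI p hp 0 h0 0).1
      rw [show max (p - 0) 0 = p by omega] at h
      omega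
    have hcp_t : ∀ t : ℕ, c (p - t) = max (p - t) (c 0) := by
      intro t
      have h := (prodI p hp 0 h0 t).2
      rw [show max (p - t) 0 = p - t by omega, hM0, hMp, hcp] at h
      rw [h]
      omega
    have hc0 : c 0 = 0 := by
      rcases Nat.eq_zero_or_pos p with hp0 | hp0
      · subst hp0; exact hcp
      · have h1 := hcp_t 0
        rw [Nat.sub_zero] at h1
        by_contra hc0ne
        have hle : c 0 ≤ p := by rw [hcp] at h1; omega
        have h2 := hcp_t (p - c 0)
        rw [show p - (p - c 0) = c 0 by omega] at h2
        have hc0P : c 0 ∈ P := by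
          have hh := Pdc p hp (p - c 0)
          rwa [show p - (p - c 0) = c 0 by omega] at hh
        have h3 := cinj1 (c 0) hc0P 0 h0 (by rw [h2]; omega)
        omega
    have hcsub : ∀ q ∈ P, ∀ t : ℕ, c (q - t) = c q - (t - M q) := by
      intro q hq t
      have h := (prodI q hq 0 h0 t).2
      rw [show max (q - t) 0 = q - t by omega, hM0, hc0] at h
      rw [h]
      omega
    have hMzero : ∀ q ∈ P, M q = 0 := by
      intro q hq
      rcases Nat.eq_zero_or_pos q with h | h
      · rw [h]; exact hM0
      · have h1 := hcsub q hq (M q)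
        have hqP : q - M q ∈ P := Pdc q hq (M q)
        have h2 := cinj1 (q - M q) hqP q hq (by rw [h1]; omega)
        omega
    have hcle : ∀ q ∈ P, c q ≤ q := by
      intro q hq
      have h1 := hcsub q hq q
      rw [hMzero q hq, Nat.sub_self] at h1
      omega
    have hcP : ∀ q ∈ P, c q ∈ P := by
      intro q hq
      have h := hend.1 (0,0,q) (mem 0 0 hq)
      rw [hform q hq 0 0] at h
      exact h
    have hcid : ∀ q : ℕ, q ∈ P → c q = q := by
      intro q
      induction q using Nat.strong_induction_on with
      | _ q IH =>
        intro hq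
        rcases eq_or_lt_of_le (hcle q hq) with h | h
        · exact h
        · exfalso
          have hw := hcP q hq
          have h1 : c (c q) = c q := IH (c q) h hw
          have h2 := cinj1 (c q) hw q hq h1
          omega
    intro x hx
    obtain ⟨a, b, q⟩ := x
    have hq : q ∈ P := hx
    rw [hform q hq a b, hMzero q hq, hcid q hq]
    simp
  -- reading off data from a fixed point
  have fixinfo : ∀ a b q : ℕ, q ∈ P → ε (a,b,q) = (a,b,q) →
      M q + a * k = a ∧ M q + b * k = b ∧ c q = q := by
    intro a b q hq hfix
    rw [hform q hq a b] at hfix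
    simp only [Prod.mk.injEq] at hfix
    exact hfix
  -- a fixed non-idempotent forces the identity
  have kfix1 : ∀ a b q : ℕ, q ∈ P → a ≠ b → ε (a,b,q) = (a,b,q) → ∀ x ∈ BF P, ε x = x := by
    intro a b q hq hab hfix
    obtain ⟨h1, h2, h3⟩ := fixinfo a b q hq hfix
    have hk1 : k = 1 := by
      rcases Nat.lt_or_ge k 2 with h | h
      · omega
      · exfalso
        have ha : a * 2 ≤ a * k := Nat.mul_le_mul (le_refl a) h
        have hb : b * 2 ≤ b * k := Nat.mul_le_mul (le_refl b) h
        omega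
    have hM : M q = 0 := by rw [hk1] at h1; omega
    exact key q hq hk1 hM h3
  -- slope ≥ 2 together with a fixed level ≥ 2 is impossible
  have contra2 : 2 ≤ k → ∀ s ∈ P, 2 ≤ s → M s = 0 → c s = s → False := by
    intro hk2 s hs hs2 hMs hcs
    have hM0 : M 0 = 0 := by
      have h := (prodI s hs 0 h0 0).1
      rw [show max (s - 0) 0 = s by omega] at h
      simp only [Nat.zero_mul] at h
      omega
    have h1P : (1:ℕ) ∈ P := by
      have hh := Pdc s hs (s - 1)
      rwa [show s - (s - 1) = 1 by omega] at hh
    have hM1 : M 1 = 0 := by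
      have h := (prodI s hs 0 h0 (s-1)).1
      rw [show max (s - (s-1)) 0 = 1 by omega] at h
      omega
    have hc1 : c 1 = c 0 := by
      have h := (prodI s hs 0 h0 (s-1)).2
      rw [show max (s - (s-1)) 0 = 1 by omega, hM0, hMs, hcs] at h
      have hmul2 : (s-1) * 2 ≤ (s-1) * k := Nat.mul_le_mul (le_refl (s-1)) hk2
      rw [h]
      omega
    have := cinj0 1 h1P 0 h0 hc1 (by omega)
    omega
  constructor
  · constructor
    · intro hid
      exact ⟨0, 1, 0, h0, by omega, hid (0,1,0) (mem 0 1 h0)⟩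
    · rintro ⟨i, j, p, hp, hij, hfix⟩
      exact kfix1 i j p hp hij hfix
  · constructor
    · intro hid
      refine ⟨(0,0,0), mem 0 0 h0, (0,1,0), mem 0 1 h0, (1,0,0), mem 1 0 h0, ?_, ?_, ?_,
        hid _ (mem 0 0 h0), hid _ (mem 0 1 h0), hid _ (mem 1 0 h0)⟩ <;> decide
    · rintro ⟨⟨a1,b1,q1⟩, hx, ⟨a2,b2,q2⟩, hy, ⟨a3,b3,q3⟩, hz, hxy, hxz, hyz, fx, fy, fz⟩
      have hq1 : q1 ∈ P := hx
      have hq2 : q2 ∈ P := hy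
      have hq3 : q3 ∈ P := hz
      rcases Nat.lt_or_ge k 2 with hk2 | hk2
      · have hk1 : k = 1 := by omega
        obtain ⟨h1, h2, h3⟩ := fixinfo a1 b1 q1 hq1 fx
        have hM : M q1 = 0 := by rw [hk1] at h1; omega
        exact key q1 hq1 hk1 hM h3
      · exfalso
        obtain ⟨h11, h12, h13⟩ := fixinfo a1 b1 q1 hq1 fx
        obtain ⟨h21, h22, h23⟩ := fixinfo a2 b2 q2 hq2 fy
        obtain ⟨h31, h32, h33⟩ := fixinfo a3 b3 q3 hq3 fz
        have e1 : a1 = 0 ∧ b1 = 0 ∧ M q1 = 0 := by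
          have ha := Nat.mul_le_mul (le_refl a1) hk2
          have hb := Nat.mul_le_mul (le_refl b1) hk2
          omega
        have e2 : a2 = 0 ∧ b2 = 0 ∧ M q2 = 0 := by
          have ha := Nat.mul_le_mul (le_refl a2) hk2
          have hb := Nat.mul_le_mul (le_refl b2) hk2
          omega
        have e3 : a3 = 0 ∧ b3 = 0 ∧ M q3 = 0 := by
          have ha := Nat.mul_le_mul (le_refl a3) hk2
          have hb := Nat.mul_le_mul (le_refl b3) hk2
          omega
        have hq12 : q1 ≠ q2 := fun h => hxy (by simp only [Prod.mk.injEq]; omega)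
        have hq13 : q1 ≠ q3 := fun h => hxz (by simp only [Prod.mk.injEq]; omega)
        have hq23 : q2 ≠ q3 := fun h => hyz (by simp only [Prod.mk.injEq]; omega)
        have hbig : 2 ≤ q1 ∨ 2 ≤ q2 ∨ 2 ≤ q3 := by omega
        rcases hbig with h | h | h
        · exact contra2 hk2 q1 hq1 h e1.2.2 h13
        · exact contra2 hk2 q2 hq2 h e2.2.2 h23
        · exact contra2 hk2 q3 hq3 h e3.2.2 h33
end

section
/- Let P ⊆ ℕ be ω-closed with 0 ∈ P and with at least two elements. If ε is an injective endomorphism of the semigroup B_ω^𝓕 (𝓕 = {[p) : p ∈ P}) such that ε(1,1,0) = (1,1,0), then ε is the identity map. (Lemma 2.1) -/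
lemma bmul_eq (i₁ j₁ p₁ i₂ j₂ p₂ : ℕ) :
    bmul (i₁, j₁, p₁) (i₂, j₂, p₂)
      = (i₁ + (i₂ - j₁), j₂ + (j₁ - i₂), max (p₁ - (i₂ - j₁)) (p₂ - (j₁ - i₂))) := rfl

lemma triple_eq {a b c a' b' c' : ℕ}
    (h : ((a, b, c) : ℕ × ℕ × ℕ) = (a', b', c')) : a = a' ∧ b = b' ∧ c = c' := by
  simpa [Prod.ext_iff] using h

lemma triple_eq' {a b c a' b' c' : ℕ}
    (h1 : a = a') (h2 : b = b') (h3 : c = c') :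
    ((a, b, c) : ℕ × ℕ × ℕ) = (a', b', c') := by
  rw [h1, h2, h3]

/-- **Lemma 2.1.** If an injective endomorphism `ε` of `B_ω^𝓕` (`P` ω-closed, `0 ∈ P`,
`P` with at least two elements) satisfies `ε (1,1,0) = (1,1,0)`, then `ε` is the identity. -/
theorem identity_of_fixes_one_one_zero (P : Set ℕ) (hP : OmegaClosed P) (h0 : 0 ∈ P)
    (hP2 : P.Nontrivial) (ε : ℕ × ℕ × ℕ → ℕ × ℕ × ℕ)
    (hend : IsEndo P ε) (hinj : Set.InjOn ε (BF P))
    (hfix : ε (1, 1, 0) = (1, 1, 0)) :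
    ∀ x ∈ BF P, ε x = x := by
  obtain ⟨hmem, hmul⟩ := hend
  have mem : ∀ i j p : ℕ, p ∈ P → ((i, j, p) : ℕ × ℕ × ℕ) ∈ BF P := fun i j p hp => hp
  -- unknowns for ε a and ε b
  obtain ⟨i, j, p, ha⟩ : ∃ i j p, ε (0, 1, 0) = (i, j, p) := ⟨_, _, _, rfl⟩
  obtain ⟨k, l, q, hb⟩ : ∃ k l q, ε (1, 0, 0) = (k, l, q) := ⟨_, _, _, rfl⟩
  -- a · t = a  gives 1 ≤ j
  have hj : 1 ≤ j := by
    have e := hmul (0, 1, 0) (mem _ _ _ h0) (1, 1, 0) (mem _ _ _ h0)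
    rw [show bmul (0, 1, 0) (1, 1, 0) = (0, 1, 0) from rfl, ha, hfix, bmul_eq] at e
    obtain ⟨-, c2, -⟩ := triple_eq e
    omega
  -- t · b = b  gives 1 ≤ k
  have hk : 1 ≤ k := by
    have e := hmul (1, 1, 0) (mem _ _ _ h0) (1, 0, 0) (mem _ _ _ h0)
    rw [show bmul (1, 1, 0) (1, 0, 0) = (1, 0, 0) from rfl, hb, hfix, bmul_eq] at e
    obtain ⟨c1, -, -⟩ := triple_eq e
    omega
  -- b · a = t  pins down shapes
  have eba := hmul (1, 0, 0) (mem _ _ _ h0) (0, 1, 0) (mem _ _ _ h0)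
  rw [show bmul (1, 0, 0) (0, 1, 0) = (1, 1, 0) from rfl, hfix, ha, hb, bmul_eq] at eba
  obtain ⟨c1, c2, c3⟩ := triple_eq eba
  have hk1 : k = 1 := by omega
  have hj1 : j = 1 := by omega
  have hli : i = l := by omega
  have hp0 : p = 0 := by omega
  have hq0 : q = 0 := by omega
  subst hk1 hj1 hp0 hq0
  subst hli
  clear c1 c2 c3 eba hj hk
  -- a · b = identity : ε (0,0,0) = (i,i,0)
  have e00 : ε (0, 0, 0) = (i, i, 0) := by
    have e := hmul (0, 1, 0) (mem _ _ _ h0) (1, 0, 0) (mem _ _ _ h0)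
    rw [show bmul (0, 1, 0) (1, 0, 0) = (0, 0, 0) from rfl, ha, hb, bmul_eq] at e
    rw [e]
    exact triple_eq' (by omega) (by omega) (by omega)
  -- identity · t = t gives i ≤ 1; injectivity kills i = 1
  have hi0 : i = 0 := by
    have e := hmul (0, 0, 0) (mem _ _ _ h0) (1, 1, 0) (mem _ _ _ h0)
    rw [show bmul (0, 0, 0) (1, 1, 0) = (1, 1, 0) from rfl, e00, hfix, bmul_eq] at e
    obtain ⟨c1, -, -⟩ := triple_eq e
    by_contra hne
    have hi : i = 1 := by omega
    subst hi
    have h01 : ((0, 0, 0) : ℕ × ℕ × ℕ) = (1, 1, 0) :=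
      hinj (mem _ _ _ h0) (mem _ _ _ h0) (by rw [e00, hfix])
    obtain ⟨c, -, -⟩ := triple_eq h01
    omega
  subst hi0
  -- powers of b and a
  have hbn : ∀ n : ℕ, ε (n, 0, 0) = (n, 0, 0) := by
    intro n
    induction n with
    | zero => exact e00
    | succ n ih =>
      have e := hmul (n, 0, 0) (mem _ _ _ h0) (1, 0, 0) (mem _ _ _ h0)
      rw [show bmul (n, 0, 0) (1, 0, 0) = (n + 1, 0, 0) by
          rw [bmul_eq]; exact triple_eq' (by omega) (by omega) (by omega),
        ih, hb, bmul_eq] at e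
      rw [e]
      exact triple_eq' (by omega) (by omega) (by omega)
  have han : ∀ n : ℕ, ε (0, n, 0) = (0, n, 0) := by
    intro n
    induction n with
    | zero => exact e00
    | succ n ih =>
      have e := hmul (0, 1, 0) (mem _ _ _ h0) (0, n, 0) (mem _ _ _ h0)
      rw [show bmul (0, 1, 0) (0, n, 0) = (0, n + 1, 0) by
          rw [bmul_eq]; exact triple_eq' (by omega) (by omega) (by omega),
        ih, ha, bmul_eq] at e
      rw [e]
      exact triple_eq' (by omega) (by omega) (by omega)
  -- ε fixes (0,0,p) for p ∈ P
  have hfp : ∀ p : ℕ, p ∈ P → ε (0, 0, p) = (0, 0, p) := by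
    intro p
    induction p using Nat.strong_induction_on with
    | _ p ih =>
      intro hp
      rcases Nat.eq_zero_or_pos p with h | h
      · subst h; exact e00
      · have hp1 : p - 1 ∈ P := by
          have := hP 0 h0 p hp 1
          simpa using this
        have ih1 : ε (0, 0, p - 1) = (0, 0, p - 1) := ih (p - 1) (by omega) hp1
        -- ε (0, 1, p-1) = (0, 1, p-1)
        have e1 : ε (0, 1, p - 1) = (0, 1, p - 1) := by
          have e := hmul (0, 0, p - 1) (mem _ _ _ hp1) (0, 1, 0) (mem _ _ _ h0)
          rw [show bmul (0, 0, p - 1) (0, 1, 0) = (0, 1, p - 1) by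
              rw [bmul_eq]; exact triple_eq' (by omega) (by omega) (by omega),
            ih1, ha, bmul_eq] at e
          rw [e]
          exact triple_eq' (by omega) (by omega) (by omega)
        -- ε (1, 1, p-1) = (1, 1, p-1)
        have e2 : ε (1, 1, p - 1) = (1, 1, p - 1) := by
          have e := hmul (1, 0, 0) (mem _ _ _ h0) (0, 1, p - 1) (mem _ _ _ hp1)
          rw [show bmul (1, 0, 0) (0, 1, p - 1) = (1, 1, p - 1) by
              rw [bmul_eq]; exact triple_eq' (by omega) (by omega) (by omega),
            e1, hb, bmul_eq] at e
          rw [e]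
          exact triple_eq' (by omega) (by omega) (by omega)
        -- key relation (0,0,p) · t = (1,1,p-1)
        obtain ⟨m, n, s, hmns⟩ : ∃ m n s, ε (0, 0, p) = (m, n, s) := ⟨_, _, _, rfl⟩
        have key := hmul (0, 0, p) (mem _ _ _ hp) (1, 1, 0) (mem _ _ _ h0)
        rw [show bmul (0, 0, p) (1, 1, 0) = (1, 1, p - 1) by
            rw [bmul_eq]; exact triple_eq' (by omega) (by omega) (by omega),
          e2, hmns, hfix, bmul_eq] at key
        obtain ⟨c1, c2, c3⟩ := triple_eq key
        rcases Nat.lt_or_ge n 1 with hn | hn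
        · -- n = 0, so m = 0 and s - 1 = p - 1
          rcases Nat.lt_or_ge 1 p with hp2 | hp2
          · rw [hmns]
            exact triple_eq' (by omega) (by omega) (by omega)
          · have hpe : p = 1 := by omega
            subst hpe
            rcases Nat.eq_zero_or_pos s with hs0 | hs1
            · exfalso
              have h01 : ((0, 0, 1) : ℕ × ℕ × ℕ) = (0, 0, 0) :=
                hinj (mem _ _ _ hp) (mem _ _ _ h0)
                  (by rw [e00, hmns]; exact triple_eq' (by omega) (by omega) (by omega))
              obtain ⟨-, -, c⟩ := triple_eq h01
              omega
            · rw [hmns]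
              exact triple_eq' (by omega) (by omega) (by omega)
        · -- n = 1: ε (0,0,p) = (1,1,p-1) = ε (1,1,p-1), contradiction
          exfalso
          have h01 : ((0, 0, p) : ℕ × ℕ × ℕ) = (1, 1, p - 1) :=
            hinj (mem _ _ _ hp) (mem _ _ _ hp1)
              (by rw [e2, hmns]; exact triple_eq' (by omega) (by omega) (by omega))
          obtain ⟨c, -, -⟩ := triple_eq h01
          omega
  -- general element
  rintro ⟨i', j', p'⟩ hx
  have hp' : p' ∈ P := hx
  have e1 : ε (0, j', p') = (0, j', p') := by
    have e := hmul (0, 0, p') (mem _ _ _ hp') (0, j', 0) (mem _ _ _ h0)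
    rw [show bmul (0, 0, p') (0, j', 0) = (0, j', p') by
        rw [bmul_eq]; exact triple_eq' (by omega) (by omega) (by omega),
      hfp p' hp', han j', bmul_eq] at e
    rw [e]
    exact triple_eq' (by omega) (by omega) (by omega)
  have e := hmul (i', 0, 0) (mem _ _ _ h0) (0, j', p') (mem _ _ _ hp')
  rw [show bmul (i', 0, 0) (0, j', p') = (i', j', p') by
      rw [bmul_eq]; exact triple_eq' (by omega) (by omega) (by omega),
    e1, hbn i', bmul_eq] at e
  rw [e]
  exact triple_eq' (by omega) (by omega) (by omega)
end

section
/- Let P ⊆ ℕ be ω-closed with 0 ∈ P and with at least two elements, and let ε be an injective endomorphism of the semigroup B_ω^𝓕 (𝓕 = {[p) : p ∈ P}). If there exists an idempotent (i,i,p) ∈ B_ω^𝓕 with (i,i,p) ∉ {(0,0,0), (0,0,1)} such that ε(i,i,p) = (i,i,p), then ε is the identity map. (Lemma 2.3) -/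
/-- Componentwise equality for triples of naturals. -/
theorem BFaux.teq (x y : ℕ × ℕ × ℕ) :
    x = y ↔ x.1 = y.1 ∧ x.2.1 = y.2.1 ∧ x.2.2 = y.2.2 := by
  constructor
  · rintro rfl; exact ⟨rfl, rfl, rfl⟩
  · rintro ⟨h1, h2, h3⟩
    exact Prod.ext h1 (Prod.ext h2 h3)


open BFaux in
set_option maxHeartbeats 4000000 in
/-- **Lemma 2.3.** If an injective endomorphism `ε` of `B_ω^𝓕` (`P` ω-closed, `0 ∈ P`,
`P` with at least two elements) fixes some idempotent `(i,i,p) ∉ {(0,0,0), (0,0,1)}`,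
then `ε` is the identity. -/
theorem identity_of_fixes_idempotent (P : Set ℕ) (hP : OmegaClosed P) (h0 : 0 ∈ P)
    (hP2 : P.Nontrivial) (ε : ℕ × ℕ × ℕ → ℕ × ℕ × ℕ)
    (hend : IsEndo P ε) (hinj : Set.InjOn ε (BF P))
    (i p : ℕ) (hp : p ∈ P)
    (hne0 : ((i, i, p) : ℕ × ℕ × ℕ) ≠ (0, 0, 0))
    (hne1 : ((i, i, p) : ℕ × ℕ × ℕ) ≠ (0, 0, 1))
    (hfix : ε (i, i, p) = (i, i, p)) :
    ∀ x ∈ BF P, ε x = x := by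
  obtain ⟨hmap, hmul⟩ := hend
  -- P is downward closed
  have hdc : ∀ p' ∈ P, ∀ q, q ≤ p' → q ∈ P := by
    intro p' hp' q hq
    have h := hP 0 h0 p' hp' (p' - q)
    have e : max 0 (p' - (p' - q)) = q := by omega
    rwa [e] at h
  have h1P : 1 ∈ P := by
    obtain ⟨u, hu, v, hv, huv⟩ := hP2
    rcases Nat.lt_or_ge u 1 with h | h
    · exact hdc v hv 1 (by omega)
    · exact hdc u hu 1 h
  have hBF : ∀ {a b c : ℕ}, c ∈ P → ((a, b, c) : ℕ × ℕ × ℕ) ∈ BF P := fun h => h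
  have hmulε : ∀ (a b c a' b' c' : ℕ), c ∈ P → c' ∈ P →
      ε (bmul (a, b, c) (a', b', c')) = bmul (ε (a, b, c)) (ε (a', b', c')) :=
    fun a b c a' b' c' h h' => hmul _ (hBF h) _ (hBF h')
  -- ε(0,0,0) is an idempotent (k,k,r)
  have hq0 := hmulε 0 0 0 0 0 0 h0 h0
  rw [show bmul ((0:ℕ),0,0) (0,0,0) = ((0:ℕ),0,0) from by
      simp only [teq, bmul, true_and, and_true] <;> omega] at hq0
  have hidem1 : (ε (0,0,0)).1 = (ε (0,0,0)).2.1 := by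
    have h := hq0.symm
    simp only [teq, bmul, true_and, and_true] at h
    omega
  obtain ⟨k, r, hE1⟩ : ∃ k r, ε ((0:ℕ),0,0) = (k, k, r) :=
    ⟨_, _, by rw [teq]; exact ⟨rfl, hidem1.symm, rfl⟩⟩
  -- ε(0,1,0) is not idempotent
  have hA12 : (ε (0,1,0)).1 ≠ (ε (0,1,0)).2.1 := by
    intro hAe
    have hAA : bmul (ε (0,1,0)) (ε (0,1,0)) = ε (0,1,0) := by
      simp only [teq, bmul, true_and, and_true] <;> omega
    have h2 := hmulε 0 1 0 0 1 0 h0 h0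
    rw [show bmul ((0:ℕ),1,0) (0,1,0) = ((0:ℕ),2,0) from by
        simp only [teq, bmul, true_and, and_true] <;> omega, hAA] at h2
    have h3 := hinj (hBF h0) (hBF h0) h2
    simp only [teq, true_and, and_true] at h3
    omega
  -- relations giving shapes of ε(0,1,0), ε(1,0,0)
  have h1a := hmulε 0 0 0 0 1 0 h0 h0
  rw [show bmul ((0:ℕ),0,0) (0,1,0) = ((0:ℕ),1,0) from by
      simp only [teq, bmul, true_and, and_true] <;> omega, hE1] at h1a
  have ha1 := hmulε 0 1 0 0 0 0 h0 h0
  rw [show bmul ((0:ℕ),1,0) (0,0,0) = ((0:ℕ),1,0) from by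
      simp only [teq, bmul, true_and, and_true] <;> omega, hE1] at ha1
  have hb1 := hmulε 1 0 0 0 0 0 h0 h0
  rw [show bmul ((1:ℕ),0,0) (0,0,0) = ((1:ℕ),0,0) from by
      simp only [teq, bmul, true_and, and_true] <;> omega, hE1] at hb1
  have h1b := hmulε 0 0 0 1 0 0 h0 h0
  rw [show bmul ((0:ℕ),0,0) (1,0,0) = ((1:ℕ),0,0) from by
      simp only [teq, bmul, true_and, and_true] <;> omega, hE1] at h1b
  have hab := hmulε 0 1 0 1 0 0 h0 h0
  rw [show bmul ((0:ℕ),1,0) (1,0,0) = ((0:ℕ),0,0) from by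
      simp only [teq, bmul, true_and, and_true] <;> omega, hE1] at hab
  simp only [teq, bmul, true_and, and_true] at h1a ha1 hb1 h1b hab
  obtain ⟨d, hd, hA, hB⟩ : ∃ d, 1 ≤ d ∧ ε ((0:ℕ),1,0) = (k, k+d, r)
      ∧ ε ((1:ℕ),0,0) = (k+d, k, r) := by
    refine ⟨(ε ((0:ℕ),1,0)).2.1 - k, by omega, ?_, ?_⟩
    · simp only [teq, true_and, and_true] <;> omega
    · simp only [teq, true_and, and_true] <;> omega
  -- powers of a and b
  have hAn : ∀ n : ℕ, ε ((0:ℕ), n, 0) = (k, k + n*d, r) := by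
    intro n
    induction n with
    | zero => rw [hE1]; simp only [teq, true_and, and_true] <;> omega
    | succ m ih =>
      have h2 := hmulε 0 m 0 0 1 0 h0 h0
      rw [show bmul ((0:ℕ),m,0) (0,1,0) = ((0:ℕ),m+1,0) from by
          simp only [teq, bmul, true_and, and_true] <;> omega, ih, hA] at h2
      rw [h2, show (m+1)*d = m*d + d from by ring]
      obtain ⟨N, hN⟩ : ∃ N, m*d = N := ⟨_, rfl⟩
      rw [hN]
      simp only [teq, bmul, true_and, and_true] <;> omega
  have hBn : ∀ n : ℕ, ε ((n:ℕ), 0, 0) = (k + n*d, k, r) := by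
    intro n
    induction n with
    | zero => rw [hE1]; simp only [teq, true_and, and_true] <;> omega
    | succ m ih =>
      have h2 := hmulε 1 0 0 m 0 0 h0 h0
      rw [show bmul ((1:ℕ),0,0) (m,0,0) = ((m+1:ℕ),0,0) from by
          simp only [teq, bmul, true_and, and_true] <;> omega, ih, hB] at h2
      rw [h2, show (m+1)*d = m*d + d from by ring]
      obtain ⟨N, hN⟩ : ∃ N, m*d = N := ⟨_, rfl⟩
      rw [hN]
      simp only [teq, bmul, true_and, and_true] <;> omega
  -- shape of ε(0,0,p')
  have hCshape : ∀ p' ∈ P, ∃ g h', ε ((0:ℕ),0,p') = (g, g, h') ∧ k ≤ g ∧ r - (g - k) ≤ h' := by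
    intro p' hp'
    have hq := hmulε 0 0 p' 0 0 p' hp' hp'
    rw [show bmul ((0:ℕ),0,p') (0,0,p') = ((0:ℕ),0,p') from by
        simp only [teq, bmul, true_and, and_true] <;> omega] at hq
    have hid : (ε (0,0,p')).1 = (ε (0,0,p')).2.1 := by
      have h := hq.symm
      simp only [teq, bmul, true_and, and_true] at h
      omega
    have h1c := hmulε 0 0 0 0 0 p' h0 hp'
    rw [show bmul ((0:ℕ),0,0) (0,0,p') = ((0:ℕ),0,p') from by
        simp only [teq, bmul, true_and, and_true] <;> omega, hE1] at h1c
    simp only [teq, bmul] at h1c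
    exact ⟨(ε ((0:ℕ),0,p')).1, (ε ((0:ℕ),0,p')).2.2,
      by rw [teq]; exact ⟨rfl, hid.symm, rfl⟩, by omega, by omega⟩
  -- master formula
  have hmaster : ∀ p' ∈ P, ∀ a b : ℕ,
      ε (a, b, p') = ((ε ((0:ℕ),0,p')).1 + a*d, (ε ((0:ℕ),0,p')).1 + b*d,
        (ε ((0:ℕ),0,p')).2.2) := by
    intro p' hp' a b
    obtain ⟨g, h', hC, hkg, hrh⟩ := hCshape p' hp'
    have h2 := hmulε 0 0 p' 0 b 0 hp' h0
    rw [show bmul ((0:ℕ),0,p') (0,b,0) = ((0:ℕ),b,p') from by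
        simp only [teq, bmul, true_and, and_true] <;> omega] at h2
    have h1 := hmulε a 0 0 0 b p' h0 hp'
    rw [show bmul ((a:ℕ),0,0) (0,b,p') = ((a:ℕ),b,p') from by
        simp only [teq, bmul, true_and, and_true] <;> omega] at h1
    rw [h1, h2, hBn a, hAn b, hC]
    obtain ⟨I, hI⟩ : ∃ I, a*d = I := ⟨_, rfl⟩
    obtain ⟨J, hJ⟩ : ∃ J, b*d = J := ⟨_, rfl⟩
    rw [hI, hJ]
    simp only [teq, bmul, true_and, and_true] <;> omega
  -- analysis of the fixed idempotent
  have hfp := hmaster p hp i i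
  rw [hfix] at hfp
  obtain ⟨g0, h0', hC0, hkg0, hrh0⟩ := hCshape p hp
  rw [hC0] at hfp
  simp only [teq, true_and, and_true] at hfp
  have hiled : i ≤ i * d := by
    have h := Nat.mul_le_mul_left i hd
    rwa [mul_one] at h
  have hg00 : g0 = 0 := by omega
  have hk0 : k = 0 := by omega
  subst hk0
  subst hg00
  have hfix0 : ε ((0:ℕ),0,p) = (0,0,p) := by
    rw [hC0]; simp only [teq, true_and, and_true] <;> omega
  have hd1 : d = 1 := by
    rcases Nat.eq_zero_or_pos i with hi0 | hipos
    · subst hi0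
      have hp2 : 2 ≤ p := by
        have hpne0 : p ≠ 0 := fun h => hne0 (by rw [h])
        have hpne1 : p ≠ 1 := fun h => hne1 (by rw [h])
        omega
      by_contra hdne
      have hd2 : 2 ≤ d := by omega
      obtain ⟨n, hn⟩ : ∃ n, p = n + 1 := ⟨p-1, by omega⟩
      have s1 := hmulε 0 n 0 0 0 p h0 hp
      rw [show bmul ((0:ℕ),n,0) (0,0,p) = ((0:ℕ),n,1) from by
          simp only [teq, bmul, true_and, and_true] <;> omega] at s1
      have s2 := hmulε 0 n 1 n 0 0 h1P h0
      rw [show bmul ((0:ℕ),n,1) (n,0,0) = ((0:ℕ),0,1) from by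
          simp only [teq, bmul, true_and, and_true] <;> omega] at s2
      rw [s1, hAn n, hBn n, hfix0] at s2
      have hnd : p ≤ n * d := le_trans (by omega) (Nat.mul_le_mul_left n hd2)
      obtain ⟨N, hN⟩ : ∃ N, n*d = N := ⟨_, rfl⟩
      rw [hN] at s2 hnd
      have s3 : ε ((0:ℕ),0,1) = ε ((0:ℕ),0,0) := by
        rw [s2, hE1]
        simp only [teq, bmul, true_and, and_true] <;> omega
      have h4 := hinj (hBF h1P) (hBF h0) s3
      simp only [teq, true_and, and_true] at h4
      omega
    · have him : i * d = i := by omega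
      exact Nat.eq_of_mul_eq_mul_left hipos (him.trans (mul_one i).symm)
  subst hd1
  -- r = 0
  have hr0 : r = 0 := by
    rcases Nat.eq_zero_or_pos p with hp0 | hppos
    · have h5 : ε ((0:ℕ),0,0) = ((0:ℕ),0,0) := by
        have h := hfix0; rw [hp0] at h; exact h
      have h6 := hE1.symm.trans h5
      simp only [teq, true_and, and_true] at h6
      omega
    · by_contra hrne
      obtain ⟨n, hn⟩ : ∃ n, p = n + 1 := ⟨p-1, by omega⟩
      have s1 := hmulε 0 n 0 0 0 p h0 hp
      rw [show bmul ((0:ℕ),n,0) (0,0,p) = ((0:ℕ),n,1) from by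
          simp only [teq, bmul, true_and, and_true] <;> omega] at s1
      have s2 := hmulε 0 n 1 n 0 0 h1P h0
      rw [show bmul ((0:ℕ),n,1) (n,0,0) = ((0:ℕ),0,1) from by
          simp only [teq, bmul, true_and, and_true] <;> omega] at s2
      rw [s1, hAn n, hBn n, hfix0] at s2
      have s3 : ε ((0:ℕ),0,1) = ε ((0:ℕ),0,0) := by
        rw [s2, hE1]
        simp only [teq, bmul, true_and, and_true] <;> omega
      have h4 := hinj (hBF h1P) (hBF h0) s3
      simp only [teq, true_and, and_true] at h4
      omega
  subst hr0
  -- cleaned power formulas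
  have hAn1 : ∀ n : ℕ, ε ((0:ℕ), n, 0) = (0, n, 0) := by
    intro n; rw [hAn n]; simp only [teq, true_and, and_true] <;> omega
  have hBn1 : ∀ n : ℕ, ε ((n:ℕ), 0, 0) = (n, 0, 0) := by
    intro n; rw [hBn n]; simp only [teq, true_and, and_true] <;> omega
  -- first coordinate of ε(0,0,p') vanishes
  have hg0all : ∀ p', p' ∈ P → (ε ((0:ℕ),0,p')).1 = 0 := by
    intro p'
    induction p' with
    | zero => intro _; rw [hE1]
    | succ q ih =>
      intro hq1
      have hqP : q ∈ P := hdc _ hq1 q (by omega)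
      obtain ⟨g, h', hC, _, _⟩ := hCshape (q+1) hq1
      obtain ⟨g2, h2, hC2, _, _⟩ := hCshape q hqP
      have hg2 : g2 = 0 := by
        have h := ih hqP; rw [hC2] at h; exact h
      subst hg2
      have s1 := hmulε 0 1 0 0 0 (q+1) h0 hq1
      rw [show bmul ((0:ℕ),1,0) (0,0,q+1) = ((0:ℕ),1,q) from by
          simp only [teq, bmul, true_and, and_true] <;> omega] at s1
      have s2 := hmulε 0 0 q 0 1 0 hqP h0
      rw [show bmul ((0:ℕ),0,q) (0,1,0) = ((0:ℕ),1,q) from by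
          simp only [teq, bmul, true_and, and_true] <;> omega] at s2
      rw [hA, hC] at s1
      rw [hC2, hA] at s2
      have s3 := s1.symm.trans s2
      simp only [teq, bmul, true_and, and_true] at s3
      rcases (show g = 0 ∨ (g = 1 ∧ h' = h2) from by omega) with hg | ⟨hg1, hh⟩
      · rw [hC]; exact hg
      · subst hg1
        subst hh
        have hm := hmaster q hqP 1 1
        rw [hC2] at hm
        have hm' : ε ((1:ℕ),1,q) = ((1:ℕ),1,h') := by
          rw [hm] <;> simp only [teq, true_and, and_true] <;> omega
        have h4 := hinj (hBF hq1) (hBF hqP) (hC.trans hm'.symm)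
        simp only [teq, true_and, and_true] at h4
        omega
  -- subtraction relation on third coordinates
  have hsub : ∀ p' ∈ P, ∀ n : ℕ,
      ε ((0:ℕ),0,p'-n) = (0, 0, (ε ((0:ℕ),0,p')).2.2 - n) := by
    intro p' hp' n
    obtain ⟨g, h', hC, _, _⟩ := hCshape p' hp'
    have hg : g = 0 := by have h := hg0all p' hp'; rw [hC] at h; exact h
    subst hg
    have hpn : p' - n ∈ P := hdc p' hp' _ (by omega)
    have s1 := hmulε 0 n 0 0 0 p' h0 hp'
    rw [show bmul ((0:ℕ),n,0) (0,0,p') = ((0:ℕ),n,p'-n) from by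
        simp only [teq, bmul, true_and, and_true] <;> omega] at s1
    have s2 := hmulε 0 n (p'-n) n 0 0 hpn h0
    rw [show bmul ((0:ℕ),n,p'-n) (n,0,0) = ((0:ℕ),0,p'-n) from by
        simp only [teq, bmul, true_and, and_true] <;> omega] at s2
    rw [s1, hAn1 n, hBn1 n, hC] at s2
    rw [s2, hC]
    simp only [teq, bmul, true_and, and_true] <;> omega
  -- ε fixes all (0,0,p')
  have hfinal0 : ∀ p' ∈ P, ε ((0:ℕ),0,p') = (0,0,p') := by
    intro p' hp'
    obtain ⟨g, h', hC, _, _⟩ := hCshape p' hp'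
    have hg : g = 0 := by have h := hg0all p' hp'; rw [hC] at h; exact h
    subst hg
    have h1 := hsub p' hp' p'
    rw [hC] at h1
    have h1' : ε ((0:ℕ),0,0) = ((0:ℕ),0, h' - p') := by
      rw [show p' - p' = 0 from by omega] at h1; exact h1
    have hle : h' ≤ p' := by
      have h6 := hE1.symm.trans h1'
      simp only [teq, true_and, and_true] at h6
      omega
    have h2 := hsub p' hp' h'
    rw [hC] at h2
    have h2' : ε ((0:ℕ),0,p'-h') = ε ((0:ℕ),0,0) := by
      rw [h2, hE1]
      simp only [teq, true_and, and_true] <;> omega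
    have h4 := hinj (hBF (hdc p' hp' _ (by omega))) (hBF h0) h2'
    simp only [teq, true_and, and_true] at h4
    rw [hC]
    simp only [teq, true_and, and_true] <;> omega
  -- conclusion
  rintro ⟨a, b, c⟩ hx
  have hc : c ∈ P := hx
  have hm := hmaster c hc a b
  rw [hfinal0 c hc] at hm
  rw [hm]
  simp only [teq, true_and, and_true] <;> omega
end

section
/- Let ε be an injective endomorphism of the bicyclic semigroup B_ω. If ε(i,j) = (i,j) for some element (i,j) ∈ B_ω with (i,j) ≠ (0,0), then ε is the identity map. (Proposition 2.6) -/
/-- The multiplication of the bicyclic monoid `B_ω` on `ℕ × ℕ`: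
`(i₁,j₁)·(i₂,j₂) = (i₁ + (i₂ ∸ j₁), j₂ + (j₁ ∸ i₂))`. -/
def bimul (x y : ℕ × ℕ) : ℕ × ℕ :=
  (x.1 + (y.1 - x.2), y.2 + (x.2 - y.1))

/-- `ε` is an endomorphism of the bicyclic semigroup `B_ω`. -/
def IsBiEndo (ε : ℕ × ℕ → ℕ × ℕ) : Prop :=
  ∀ x y : ℕ × ℕ, ε (bimul x y) = bimul (ε x) (ε y)

/-- **Proposition 2.6.** If an injective endomorphism `ε` of the bicyclic semigroup `B_ω`
fixes some element `(i,j) ≠ (0,0)`, then `ε` is the identity map. -/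
theorem bicyclic_identity_of_fixed_point (ε : ℕ × ℕ → ℕ × ℕ)
    (hend : IsBiEndo ε) (hinj : Function.Injective ε)
    (i j : ℕ) (hne : ((i, j) : ℕ × ℕ) ≠ (0, 0)) (hfix : ε (i, j) = (i, j)) :
    ∀ x : ℕ × ℕ, ε x = x := by
  -- the image of the identity (0,0) is an idempotent (c,c)
  have he : bimul (ε (0,0)) (ε (0,0)) = ε (0,0) := by
    have h := hend (0,0) (0,0)
    simp [bimul] at h
    exact h.symm
  set c := (ε (0,0)).1 with hc
  have hee : ε (0,0) = (c, c) := by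
    have h1 : (bimul (ε (0,0)) (ε (0,0))).1 = (ε (0,0)).1 := by rw [he]
    have h2 : (bimul (ε (0,0)) (ε (0,0))).2 = (ε (0,0)).2 := by rw [he]
    simp only [bimul] at h1 h2
    have : (ε (0,0)).2 = c := by omega
    exact Prod.ext rfl this
  -- images of the generators
  set a := ε (0,1) with ha
  set b := ε (1,0) with hb
  -- ε(0,0) is a two-sided identity on a
  have ha1 : bimul (c, c) a = a := by
    have h := hend (0,0) (0,1)
    simp only [bimul, Nat.sub_zero, Nat.zero_sub, Nat.add_zero, Nat.zero_add] at h
    rw [hee] at h; exact h.symm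
  have ha2 : bimul a (c, c) = a := by
    have h := hend (0,1) (0,0)
    have hx : bimul (0,1) (0,0) = ((0 : ℕ), (1 : ℕ)) := by simp [bimul]
    rw [hx, hee] at h; exact h.symm
  have hb1 : bimul (c, c) b = b := by
    have h := hend (0,0) (1,0)
    have hx : bimul (0,0) (1,0) = ((1 : ℕ), (0 : ℕ)) := by simp [bimul]
    rw [hx, hee] at h; exact h.symm
  have hb2 : bimul b (c, c) = b := by
    have h := hend (1,0) (0,0)
    have hx : bimul (1,0) (0,0) = ((1 : ℕ), (0 : ℕ)) := by simp [bimul]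
    rw [hx, hee] at h; exact h.symm
  have hage : a.1 ≥ c ∧ a.2 ≥ c := by
    have h1 : (bimul (c, c) a).2 = a.2 := by rw [ha1]
    have h2 : (bimul a (c, c)).1 = a.1 := by rw [ha2]
    simp only [bimul] at h1 h2
    omega
  have hbge : b.1 ≥ c ∧ b.2 ≥ c := by
    have h1 : (bimul (c, c) b).2 = b.2 := by rw [hb1]
    have h2 : (bimul b (c, c)).1 = b.1 := by rw [hb2]
    simp only [bimul] at h1 h2
    omega
  -- from (0,1)(1,0) = (0,0) we get a·b = (c,c)
  have hab : bimul a b = (c, c) := by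
    have h := hend (0,1) (1,0)
    have hx : bimul (0,1) (1,0) = ((0 : ℕ), (0 : ℕ)) := by simp [bimul]
    rw [hx, hee] at h; exact h.symm
  have hq1 : a.1 = c ∧ b.2 = c ∧ a.2 = b.1 := by
    have h1 : (bimul a b).1 = c := by rw [hab]
    have h2 : (bimul a b).2 = c := by rw [hab]
    simp only [bimul] at h1 h2
    omega
  set d := a.2 - c with hd
  have haa : a = (c, c + d) := by
    have := hage.2
    refine Prod.ext hq1.1 ?_
    simp only [hd]; omega
  have hbb : b = (c + d, c) := by
    refine Prod.ext ?_ hq1.2.1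
    have := hq1.2.2
    simp only [hd]; omega
  -- d ≥ 1 by injectivity
  have hd1 : 1 ≤ d := by
    by_contra h
    have hd0 : d = 0 := by omega
    have : ε (0,1) = ε (0,0) := by
      rw [← ha, haa, hd0, hee]
      norm_num
    have := hinj this
    simp at this
  -- rows: ε(n,0) = (c + d*n, c)
  have hrow : ∀ n : ℕ, ε (n, 0) = (c + d * n, c) := by
    intro n
    induction n with
    | zero => simpa using hee
    | succ n ih =>
      have h := hend (1,0) (n,0)
      have hx : bimul (1,0) (n,0) = ((n + 1 : ℕ), (0 : ℕ)) := by
        simp [bimul]; omega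
      rw [hx, ih, ← hb, hbb] at h
      rw [h]
      simp only [bimul]
      refine Prod.ext ?_ ?_ <;> simp [Nat.mul_succ] <;> omega
  -- columns: ε(0,n) = (c, c + d*n)
  have hcol : ∀ n : ℕ, ε (0, n) = (c, c + d * n) := by
    intro n
    induction n with
    | zero => simpa using hee
    | succ n ih =>
      have h := hend (0,n) (0,1)
      have hx : bimul (0,n) (0,1) = ((0 : ℕ), (n + 1 : ℕ)) := by
        simp [bimul]; omega
      rw [hx, ih, ← ha, haa] at h
      rw [h]
      simp only [bimul]
      refine Prod.ext ?_ ?_ <;> simp [Nat.mul_succ] <;> omega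
  -- general form
  have hall : ∀ x : ℕ × ℕ, ε x = (c + d * x.1, c + d * x.2) := by
    rintro ⟨p, q⟩
    have h := hend (p, 0) (0, q)
    have hx : bimul (p, 0) (0, q) = ((p : ℕ), (q : ℕ)) := by simp [bimul]
    rw [hx, hrow, hcol] at h
    rw [h]
    simp [bimul]
  -- the fixed point forces c = 0, d = 1
  have hij := hall (i, j)
  rw [hfix] at hij
  obtain ⟨hi, hj⟩ : c + d * i = i ∧ c + d * j = j := by
    simpa [Prod.ext_iff, eq_comm] using hij
  have hpos : 1 ≤ i ∨ 1 ≤ j := by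
    by_contra h
    push_neg at h
    exact hne (by simp [Nat.lt_one_iff.mp h.1, Nat.lt_one_iff.mp h.2])
  have hc0 : c = 0 ∧ d = 1 := by
    rcases hpos with hp | hp
    · have : i ≤ d * i := Nat.le_mul_of_pos_left i hd1
      have hc : c = 0 := by omega
      have : d * i = 1 * i := by omega
      have := Nat.eq_of_mul_eq_mul_right hp this
      exact ⟨hc, this⟩
    · have : j ≤ d * j := Nat.le_mul_of_pos_left j hd1
      have hc : c = 0 := by omega
      have : d * j = 1 * j := by omega
      have := Nat.eq_of_mul_eq_mul_right hp this
      exact ⟨hc, this⟩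
  intro x
  rw [hall x, hc0.1, hc0.2]
  simp
end

section
/- For an injective endomorphism ε of the bicyclic semigroup B_ω the following conditions are equivalent: (i) ε is the identity map; (ii) there exists a non-idempotent element (i,j) ∈ B_ω (i.e. with i ≠ j) such that ε(i,j) = (i,j); (iii) ε has at least two distinct fixed points. (Remark 2.6) -/
/-- Structure of injective endomorphisms of `B_ω`: they are affine maps
`(i,j) ↦ (c + k*i, c + k*j)` with `k ≥ 1`. -/
theorem biendo_structure (ε : ℕ × ℕ → ℕ × ℕ)
    (hend : IsBiEndo ε) (hinj : Function.Injective ε) :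
    ∃ c k : ℕ, 1 ≤ k ∧ ∀ i j : ℕ, ε (i, j) = (c + k * i, c + k * j) := by
  -- ε (0,0) is idempotent, hence of the form (c,c)
  obtain ⟨c, hc⟩ : ∃ c, ε (0, 0) = (c, c) := by
    have h0 : ε (0, 0) = bimul (ε (0, 0)) (ε (0, 0)) := by
      have := hend (0, 0) (0, 0)
      simpa [bimul] using this
    rcases hh : ε (0, 0) with ⟨a, b⟩
    rw [hh] at h0
    simp [bimul, Prod.ext_iff] at h0
    have hab : b = a := by omega
    exact ⟨a, by simp [hh, hab]⟩
  -- every value of ε has both components ≥ c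
  have hge : ∀ x : ℕ × ℕ, c ≤ (ε x).1 ∧ c ≤ (ε x).2 := by
    intro x
    have h1 : ε x = bimul (c, c) (ε x) := by
      have := hend (0, 0) x
      rcases x with ⟨i, j⟩
      simpa [bimul, hc, show ε 0 = (c, c) from hc] using this
    have h2 : ε x = bimul (ε x) (c, c) := by
      have := hend x (0, 0)
      rcases x with ⟨i, j⟩
      simpa [bimul, hc, show ε 0 = (c, c) from hc] using this
    rcases hx : ε x with ⟨u, v⟩
    rw [hx] at h1 h2
    simp [bimul, Prod.ext_iff] at h1 h2
    omega
  -- analyse ε (0,1) and ε (1,0)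
  rcases hp : ε (0, 1) with ⟨a1, b1⟩
  rcases hq : ε (1, 0) with ⟨a2, b2⟩
  have hp1 := hge (0, 1); rw [hp] at hp1
  have hq1 := hge (1, 0); rw [hq] at hq1
  have hpq : (c, c) = bimul (a1, b1) (a2, b2) := by
    have := hend (0, 1) (1, 0)
    rw [show bimul (0, 1) (1, 0) = (0, 0) from rfl, hc, hp, hq] at this
    exact this
  simp [bimul, Prod.ext_iff] at hpq
  have ha1 : a1 = c := by omega
  have hb2 : b2 = c := by omega
  have hb1a2 : b1 = a2 := by omega
  -- injectivity forces b1 > c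
  have hne : ε (1, 1) ≠ (c, c) := by
    intro h
    have : (1, 1) = ((0, 0) : ℕ × ℕ) := hinj (by rw [h, hc])
    simp at this
  have h11 : ε (1, 1) = (b1, b1) := by
    have := hend (1, 0) (0, 1)
    rw [show bimul (1, 0) (0, 1) = (1, 1) from rfl, hp, hq] at this
    rw [this]
    simp [bimul, Prod.ext_iff]
    omega
  have hb1 : c < b1 := by
    rcases Nat.lt_or_ge c b1 with h | h
    · exact h
    · exfalso; apply hne; rw [h11]; exact Prod.ext (by simp; omega) (by simp; omega)
  set k := b1 - c with hk
  have hb1' : b1 = c + k := by omega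
  have hpv : ε (0, 1) = (c, c + k) := by rw [hp, ha1, hb1']
  have hqv : ε (1, 0) = (c + k, c) := by rw [hq, hb2, ← hb1a2, hb1']
  -- powers of q
  have hqi : ∀ i : ℕ, ε (i, 0) = (c + k * i, c) := by
    intro i
    induction i with
    | zero => simpa using hc
    | succ n ih =>
      have hstep : bimul (1, 0) (n, 0) = (n + 1, 0) := by
        simp [bimul, Prod.ext_iff]; omega
      have := hend (1, 0) (n, 0)
      rw [hstep, hqv, ih] at this
      rw [this]
      simp [bimul, Prod.ext_iff, Nat.mul_succ]
      omega
  -- powers of p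
  have hpj : ∀ j : ℕ, ε (0, j) = (c, c + k * j) := by
    intro j
    induction j with
    | zero => simpa using hc
    | succ n ih =>
      have hstep : bimul (0, n) (0, 1) = (0, n + 1) := by
        simp [bimul, Prod.ext_iff]; omega
      have := hend (0, n) (0, 1)
      rw [hstep, hpv, ih] at this
      rw [this]
      simp [bimul, Prod.ext_iff, Nat.mul_succ]
      omega
  refine ⟨c, k, by omega, fun i j => ?_⟩
  have hsplit : bimul (i, 0) (0, j) = (i, j) := by
    simp [bimul]
  have := hend (i, 0) (0, j)
  rw [hsplit, hqi, hpj] at this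
  rw [this]
  simp [bimul]

/-- **Remark 2.6.** For an injective endomorphism `ε` of the bicyclic semigroup `B_ω`
the following are equivalent: (i) `ε` is the identity; (ii) `ε` fixes some
non-idempotent element `(i,j)` (`i ≠ j`); (iii) `ε` has at least two distinct fixed points. -/
theorem bicyclic_identity_iff_nonidempotent_fixed_iff_two_fixed (ε : ℕ × ℕ → ℕ × ℕ)
    (hend : IsBiEndo ε) (hinj : Function.Injective ε) :
    ((∀ x : ℕ × ℕ, ε x = x) ↔ ∃ i j : ℕ, i ≠ j ∧ ε (i, j) = (i, j)) ∧
    ((∀ x : ℕ × ℕ, ε x = x) ↔ ∃ x y : ℕ × ℕ, x ≠ y ∧ ε x = x ∧ ε y = y) := by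
  obtain ⟨c, k, hk, hform⟩ := biendo_structure ε hend hinj
  have key : ∀ i j : ℕ, ε (i, j) = (i, j) → (c + k * i = i ∧ c + k * j = j) := by
    intro i j h
    rw [hform] at h
    simp [Prod.ext_iff] at h
    exact h
  have toid : ∀ i j : ℕ, i ≠ j → ε (i, j) = (i, j) → ∀ x : ℕ × ℕ, ε x = x := by
    intro i j hij h x
    obtain ⟨h1, h2⟩ := key i j h
    have hck : c = 0 ∧ k = 1 := by
      have e1 : k * i ≥ i := Nat.le_mul_of_pos_left i hk
      have e2 : k * j ≥ j := Nat.le_mul_of_pos_left j hk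
      have hc0 : c = 0 := by omega
      have : k * i = i ∧ k * j = j := by omega
      rcases Nat.eq_zero_or_pos i with hi | hi
      · have hj : 0 < j := by omega
        have := this.2
        refine ⟨hc0, ?_⟩
        by_contra hk1
        have : k ≥ 2 := by omega
        nlinarith
      · refine ⟨hc0, ?_⟩
        have := this.1
        by_contra hk1
        have : k ≥ 2 := by omega
        nlinarith
    rcases x with ⟨u, v⟩
    rw [hform, hck.1, hck.2]
    simp
  constructor
  · constructor
    · intro h
      exact ⟨0, 1, by omega, h (0, 1)⟩
    · rintro ⟨i, j, hij, h⟩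
      exact toid i j hij h
  · constructor
    · intro h
      exact ⟨(0, 0), (0, 1), by decide, h _, h _⟩
    · rintro ⟨⟨x1, x2⟩, ⟨y1, y2⟩, hxy, hx, hy⟩
      -- if either fixed point is non-idempotent, use toid; otherwise both are
      -- idempotents (i,i) ≠ (j,j), and we argue directly
      by_cases hx12 : x1 = x2
      · by_cases hy12 : y1 = y2
        · subst hx12; subst hy12
          obtain ⟨h1, _⟩ := key _ _ hx
          obtain ⟨h2, _⟩ := key _ _ hy
          have hne : x1 ≠ y1 := by
            intro h; apply hxy; rw [h]
          have e1 : k * x1 ≥ x1 := Nat.le_mul_of_pos_left x1 hk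
          have e2 : k * y1 ≥ y1 := Nat.le_mul_of_pos_left y1 hk
          have hc0 : c = 0 := by omega
          have hx1 : k * x1 = x1 := by omega
          have hy1 : k * y1 = y1 := by omega
          have hk1 : k = 1 := by
            by_contra hk1
            have hk2 : k ≥ 2 := by omega
            rcases Nat.eq_zero_or_pos x1 with h | h
            · have : 0 < y1 := by omega
              nlinarith
            · nlinarith
          intro z
          rcases z with ⟨u, v⟩
          rw [hform, hc0, hk1]
          simp
        · exact toid y1 y2 hy12 hy
      · exact toid x1 x2 hx12 hx
end

section
/- Let P = {0,1} and let k ≥ 2 be a natural number. The map μ_k : B_ω^𝓕 → B_ω^𝓕 (𝓕 = {[0), [1)}) defined by μ_k(i,j,p) = (k·i, k·j, p) is an injective endomorphism of the semigroup B_ω^𝓕. (Example 2.9) -/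
/-- **Example 2.9.** For `P = {0,1}` and `k ≥ 2`, the map
`μ_k (i,j,p) = (k·i, k·j, p)` is an injective endomorphism of `B_ω^𝓕`. -/
theorem mu_k_injective_endo (k : ℕ) (hk : 2 ≤ k) :
    IsEndo ({0, 1} : Set ℕ) (fun x : ℕ × ℕ × ℕ => (k * x.1, k * x.2.1, x.2.2)) ∧
      Set.InjOn (fun x : ℕ × ℕ × ℕ => (k * x.1, k * x.2.1, x.2.2))
        (BF ({0, 1} : Set ℕ)) := by
  constructor
  · constructor
    · intro x hx; exact hx
    · rintro ⟨i₁, j₁, p₁⟩ hx ⟨i₂, j₂, p₂⟩ hy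
      simp only [BF, Set.mem_setOf_eq, Set.mem_insert_iff, Set.mem_singleton_iff] at hx hy
      simp only [bmul, Prod.mk.injEq]
      refine ⟨?_, ?_, ?_⟩
      · rw [Nat.mul_add, Nat.mul_sub]
      · rw [Nat.mul_add, Nat.mul_sub]
      · rcases lt_trichotomy i₂ j₁ with h | h | h
        · have h1 : j₁ - i₂ ≥ 1 := by omega
          have h2 : k * j₁ - k * i₂ ≥ k := by
            rw [← Nat.mul_sub]; calc k = k * 1 := by ring
              _ ≤ k * (j₁ - i₂) := Nat.mul_le_mul_left k h1
          omega
        · subst h; simp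
        · have h1 : i₂ - j₁ ≥ 1 := by omega
          have h2 : k * i₂ - k * j₁ ≥ k := by
            rw [← Nat.mul_sub]; calc k = k * 1 := by ring
              _ ≤ k * (i₂ - j₁) := Nat.mul_le_mul_left k h1
          omega
  · rintro ⟨i₁, j₁, p₁⟩ _ ⟨i₂, j₂, p₂⟩ _ h
    simp only [Prod.mk.injEq] at h
    obtain ⟨h1, h2, h3⟩ := h
    have : i₁ = i₂ := Nat.eq_of_mul_eq_mul_left (by omega) h1
    have : j₁ = j₂ := Nat.eq_of_mul_eq_mul_left (by omega) h2
    simp_all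
end

section
/- Let P = {0,1} and let k ≥ 2 be a natural number. The map μ_k : B_ω^𝓕 → B_ω^𝓕 (𝓕 = {[0), [1)}) defined by μ_k(i,j,p) = (k·i, k·j, p) is an injective endomorphism of B_ω^𝓕 which is not the identity map and which has exactly two fixed points, namely the idempotents (0,0,0) and (0,0,1). (Hence the bound of three fixed points in condition (iii) of Theorem 2.5 cannot be lowered.) -/
/-- **Example 2.9**, refined: for `P = {0,1}` and `k ≥ 2`, the map
`μ_k (i,j,p) = (k·i, k·j, p)` is an injective endomorphism of `B_ω^𝓕` which is not the
identity, and whose fixed points in `B_ω^𝓕` are exactly the two idempotents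
`(0,0,0)` and `(0,0,1)`. -/
theorem mu_k_two_fixed_points (k : ℕ) (hk : 2 ≤ k) :
    IsEndo ({0, 1} : Set ℕ) (fun x : ℕ × ℕ × ℕ => (k * x.1, k * x.2.1, x.2.2)) ∧
    Set.InjOn (fun x : ℕ × ℕ × ℕ => (k * x.1, k * x.2.1, x.2.2))
      (BF ({0, 1} : Set ℕ)) ∧
    ¬ (∀ x ∈ BF ({0, 1} : Set ℕ),
        (fun x : ℕ × ℕ × ℕ => (k * x.1, k * x.2.1, x.2.2)) x = x) ∧
    {x ∈ BF ({0, 1} : Set ℕ) | (k * x.1, k * x.2.1, x.2.2) = x} =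
      {((0, 0, 0) : ℕ × ℕ × ℕ), ((0, 0, 1) : ℕ × ℕ × ℕ)} ∧
    bmul (0, 0, 0) (0, 0, 0) = ((0, 0, 0) : ℕ × ℕ × ℕ) ∧
    bmul (0, 0, 1) (0, 0, 1) = ((0, 0, 1) : ℕ × ℕ × ℕ) := by
  have hmem : ∀ x : ℕ × ℕ × ℕ, x ∈ BF ({0, 1} : Set ℕ) → x.2.2 ≤ 1 := by
    intro x hx
    have : x.2.2 = 0 ∨ x.2.2 = 1 := by simpa [BF] using hx
    omega
  have hsub : ∀ p t : ℕ, p ≤ 1 → p - k * t = p - t := by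
    intro p t hp
    rcases t with _ | t
    · simp
    · have h1 : t + 1 ≤ k * (t + 1) := Nat.le_mul_of_pos_left _ (by omega)
      omega
  have hms : ∀ a b : ℕ, k * a - k * b = k * (a - b) := fun a b => (Nat.mul_sub k a b).symm
  refine ⟨⟨fun x hx => hx, ?_⟩, ?_, ?_, ?_, by simp [bmul], by simp [bmul]⟩
  · intro x hx y hy
    simp only [bmul, Prod.mk.injEq, hms]
    exact ⟨by rw [Nat.mul_add], by rw [Nat.mul_add],
      by rw [hsub _ _ (hmem x hx), hsub _ _ (hmem y hy)]⟩
  · intro x _ y _ h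
    simp only [Prod.mk.injEq] at h
    have h1 := Nat.eq_of_mul_eq_mul_left (by omega : 0 < k) h.1
    have h2 := Nat.eq_of_mul_eq_mul_left (by omega : 0 < k) h.2.1
    exact Prod.ext h1 (Prod.ext h2 h.2.2)
  · intro h
    have := h (1, 0, 0) (by simp [BF])
    simp only [Prod.mk.injEq, mul_one] at this
    omega
  · ext x
    simp only [Set.mem_setOf_eq, Set.mem_insert_iff, Set.mem_singleton_iff,
      Prod.mk.injEq, Prod.ext_iff]
    constructor
    · rintro ⟨hx, h⟩
      have hp := hmem x hx
      have e1 : 2 * x.1 ≤ k * x.1 := Nat.mul_le_mul_right _ hk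
      have e2 : 2 * x.2.1 ≤ k * x.2.1 := Nat.mul_le_mul_right _ hk
      have : x.2.2 = 0 ∨ x.2.2 = 1 := by simpa [BF] using hx
      rcases this with h1 | h1
      · left; exact ⟨by omega, by omega, h1⟩
      · right; exact ⟨by omega, by omega, h1⟩
    · rintro (⟨h1, h2, h3⟩ | ⟨h1, h2, h3⟩) <;>
        exact ⟨by simp [BF, h3], by rw [h1, mul_zero], by rw [h2, mul_zero], trivial⟩
end

section
/- Let P ⊆ ℕ be ω-closed with 0 ∈ P and with at least two elements. The map μ₀ : B_ω^𝓕 → B_ω^𝓕 (𝓕 = {[p) : p ∈ P}) defined by μ₀(i,j,p) = (i,j,0) is an endomorphism of the semigroup B_ω^𝓕 which is not injective and not the identity, but which fixes the non-idempotent element (0,1,0) and has at least three fixed points. (Hence injectivity cannot be dropped from the hypotheses of Theorem 2.5.) (Example 2.8) -/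
/-- **Example 2.8.** For `P` ω-closed with `0 ∈ P` and at least two elements, the map
`μ₀ (i,j,p) = (i,j,0)` is an endomorphism of `B_ω^𝓕` which is neither injective nor the
identity, yet it fixes the non-idempotent element `(0,1,0)` and has at least three
fixed points. -/
theorem mu_zero_counterexample (P : Set ℕ) (hP : OmegaClosed P) (h0 : 0 ∈ P)
    (hP2 : P.Nontrivial) :
    IsEndo P (fun x : ℕ × ℕ × ℕ => (x.1, x.2.1, 0)) ∧
    ¬ Set.InjOn (fun x : ℕ × ℕ × ℕ => (x.1, x.2.1, 0)) (BF P) ∧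
    ¬ (∀ x ∈ BF P, (fun x : ℕ × ℕ × ℕ => (x.1, x.2.1, 0)) x = x) ∧
    (fun x : ℕ × ℕ × ℕ => (x.1, x.2.1, 0)) (0, 1, 0) = ((0, 1, 0) : ℕ × ℕ × ℕ) ∧
    bmul (0, 1, 0) (0, 1, 0) ≠ ((0, 1, 0) : ℕ × ℕ × ℕ) ∧
    (∃ x ∈ BF P, ∃ y ∈ BF P, ∃ z ∈ BF P,
      x ≠ y ∧ x ≠ z ∧ y ≠ z ∧
      (fun x : ℕ × ℕ × ℕ => (x.1, x.2.1, 0)) x = x ∧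
      (fun x : ℕ × ℕ × ℕ => (x.1, x.2.1, 0)) y = y ∧
      (fun x : ℕ × ℕ × ℕ => (x.1, x.2.1, 0)) z = z) := by
  obtain ⟨a, ha, b, hb, hab⟩ := hP2
  have hq : ∃ q ∈ P, q ≠ 0 := by
    rcases Nat.eq_zero_or_pos a with h | h
    · exact ⟨b, hb, by omega⟩
    · exact ⟨a, ha, by omega⟩
  obtain ⟨q, hqP, hq0⟩ := hq
  refine ⟨⟨fun x _ => h0, fun x _ y _ => by simp [bmul]⟩, ?_, ?_, rfl, ?_, ?_⟩
  · intro h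
    have h1 : ((0, 0, 0) : ℕ × ℕ × ℕ) ∈ BF P := h0
    have h2 : ((0, 0, q) : ℕ × ℕ × ℕ) ∈ BF P := hqP
    have := h h1 h2 rfl
    simp [Prod.ext_iff] at this
    exact hq0 this.symm
  · intro h
    have := h (0, 0, q) hqP
    simp [Prod.ext_iff] at this
    exact hq0 this.symm
  · simp [bmul, Prod.ext_iff]
  · exact ⟨(0, 0, 0), h0, (0, 1, 0), h0, (1, 0, 0), h0,
      by decide, by decide, by decide, rfl, rfl, rfl⟩
end

section
/- Let P ⊆ ℕ be ω-closed with 0 ∈ P, and let ε be an injective endomorphism of the semigroup B_ω^𝓕 (𝓕 = {[p) : p ∈ P}). If ε(0,0,0) = (0,0,0) and ε(1,1,0) = (1,1,0), then ε(m,n,0) = (m,n,0) for all m,n ∈ ℕ. (Base step in the proof of Lemma 2.1; it uses that every element (m,n,0) equals (1,0,0)^m · (0,1,0)^n in B_ω^𝓕.) -/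
/-- Base step in the proof of **Lemma 2.1**: if an injective endomorphism `ε` of
`B_ω^𝓕` (`P` ω-closed, `0 ∈ P`) fixes `(0,0,0)` and `(1,1,0)`, then it fixes `(m,n,0)`
for all `m, n ∈ ℕ`. -/
theorem endo_fixes_level_zero (P : Set ℕ) (hP : OmegaClosed P) (h0 : 0 ∈ P)
    (ε : ℕ × ℕ × ℕ → ℕ × ℕ × ℕ) (hend : IsEndo P ε) (hinj : Set.InjOn ε (BF P))
    (hfix0 : ε (0, 0, 0) = (0, 0, 0)) (hfix1 : ε (1, 1, 0) = (1, 1, 0)) :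
    ∀ m n : ℕ, ε (m, n, 0) = (m, n, 0) := by
  obtain ⟨hmem, hmul⟩ := hend
  have mem : ∀ m n : ℕ, ((m, n, 0) : ℕ × ℕ × ℕ) ∈ BF P := fun m n => h0
  have key : ε (1, 0, 0) = (1, 0, 0) ∧ ε (0, 1, 0) = (0, 1, 0) := by
    have h1 := hmul (0, 1, 0) (mem 0 1) (1, 0, 0) (mem 1 0)
    have h2 := hmul (1, 0, 0) (mem 1 0) (0, 1, 0) (mem 0 1)
    rw [show bmul ((0 : ℕ), (1 : ℕ), (0 : ℕ)) (1, 0, 0) = (0, 0, 0) by simp [bmul],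
      hfix0] at h1
    rw [show bmul ((1 : ℕ), (0 : ℕ), (0 : ℕ)) (0, 1, 0) = (1, 1, 0) by simp [bmul],
      hfix1] at h2
    simp only [bmul, Prod.ext_iff] at h1 h2 ⊢
    omega
  have ha : ∀ m : ℕ, ε (m, 0, 0) = (m, 0, 0) := by
    intro m
    induction m with
    | zero => exact hfix0
    | succ k ih =>
      have h := hmul (k, 0, 0) (mem k 0) (1, 0, 0) (mem 1 0)
      rw [show bmul ((k : ℕ), (0 : ℕ), (0 : ℕ)) (1, 0, 0) = (k + 1, 0, 0) by
        simp [bmul], ih, key.1] at h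
      rw [h]
      simp [bmul]
  intro m n
  induction n with
  | zero => exact ha m
  | succ k ih =>
    have h := hmul (m, k, 0) (mem m k) (0, 1, 0) (mem 0 1)
    rw [show bmul ((m : ℕ), (k : ℕ), (0 : ℕ)) (0, 1, 0) = (m, k + 1, 0) by
      simp only [bmul, Prod.ext_iff]; omega, ih, key.2] at h
    rw [h]
    simp only [bmul, Prod.ext_iff]; omega
end

section
/- Let P ⊆ ℕ be ω-closed with 0 ∈ P, let k ∈ ℕ with k + 1 ∈ P, and let ε be an injective endomorphism of the semigroup B_ω^𝓕 (𝓕 = {[p) : p ∈ P}). If ε(m,n,p) = (m,n,p) for all m,n ∈ ℕ and all p ∈ P with p ≤ k, then ε(0,0,k+1) = (0,0,k+1) and ε(1,1,k+1) = (1,1,k+1). (Induction step in the proof of Lemma 2.1.) -/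
/-- Induction step in the proof of **Lemma 2.1**: if an injective endomorphism `ε` of
`B_ω^𝓕` (`P` ω-closed, `0 ∈ P`, `k + 1 ∈ P`) fixes `(m,n,p)` for all `m, n ∈ ℕ` and all
`p ∈ P` with `p ≤ k`, then it fixes `(0,0,k+1)` and `(1,1,k+1)`. -/
theorem endo_fixes_next_level (P : Set ℕ) (hP : OmegaClosed P) (h0 : 0 ∈ P)
    (k : ℕ) (hk1 : k + 1 ∈ P)
    (ε : ℕ × ℕ × ℕ → ℕ × ℕ × ℕ) (hend : IsEndo P ε) (hinj : Set.InjOn ε (BF P))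
    (hfix : ∀ m n : ℕ, ∀ p ∈ P, p ≤ k → ε (m, n, p) = (m, n, p)) :
    ε (0, 0, k + 1) = (0, 0, k + 1) ∧ ε (1, 1, k + 1) = (1, 1, k + 1) := by
  obtain ⟨hmem, hmul⟩ := hend
  have hkP : k ∈ P := by simpa using hP 0 h0 (k+1) hk1 1
  have he : ((0:ℕ), (0:ℕ), k+1) ∈ BF P := hk1
  have h00 : ∀ m n : ℕ, ((m:ℕ), (n:ℕ), (0:ℕ)) ∈ BF P := fun _ _ => h0
  have hfirst : ε (0, 0, k + 1) = (0, 0, k + 1) := by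
    rcases hq : ε (0, 0, k + 1) with ⟨a, b, c⟩
    have key := hmul (1,1,0) (h00 1 1) (0,0,k+1) he
    have hb : bmul (1,1,0) (0,0,k+1) = (1,1,k) := by
      simp [bmul]
    rw [hb, hfix 1 1 0 h0 (Nat.zero_le k), hq, hfix 1 1 k hkP le_rfl] at key
    simp only [bmul, Prod.mk.injEq] at key
    obtain ⟨k1, k2, k3⟩ := key
    have ha : a ≤ 1 := by omega
    interval_cases a
    · -- a = 0, so b = 0, c - 1 = k
      have hb0 : b = 0 := by omega
      have hc : c = k + 1 ∨ (k = 0 ∧ c = 0) := by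
        simp at k3; omega
      rcases hc with hc | ⟨hk0, hc0⟩
      · rw [hb0, hc]
      · exfalso
        have h000 : ((0:ℕ),(0:ℕ),(0:ℕ)) ∈ BF P := h0
        have := hinj he h000 (by
          rw [hq, hfix 0 0 0 h0 (Nat.zero_le k), hb0, hc0])
        simp at this
    · exfalso
      have hb1 : b = 1 := by omega
      have hck : c = k := by simp at k3; omega
      have h11k : ((1:ℕ),(1:ℕ),k) ∈ BF P := hkP
      have := hinj he h11k (by
        rw [hq, hfix 1 1 k hkP le_rfl, hb1, hck])
      simp at this
  refine ⟨hfirst, ?_⟩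
  have h10 : ε (1, 0, k + 1) = (1, 0, k + 1) := by
    have key := hmul (1,0,0) (h00 1 0) (0,0,k+1) he
    have hb : bmul (1,0,0) (0,0,k+1) = (1,0,k+1) := by simp [bmul]
    rw [hb, hfix 1 0 0 h0 (Nat.zero_le k), hfirst] at key
    rw [key]; simp [bmul]
  have key2 := hmul (1,0,k+1) (by exact hk1) (0,1,0) (h00 0 1)
  have hb2 : bmul (1,0,k+1) (0,1,0) = (1,1,k+1) := by simp [bmul]
  rw [hb2, h10, hfix 0 1 0 h0 (Nat.zero_le k)] at key2
  rw [key2]; simp [bmul]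
end

section
/- Let P ⊆ ℕ be ω-closed with 0 ∈ P and k ∈ P for some k ≥ 2, and consider the natural partial order on the idempotents of B_ω^𝓕 (𝓕 = {[p) : p ∈ P}): e ≼ f iff e·f = f·e = e. Then for j ∈ ℕ the set of idempotents f of B_ω^𝓕 with (j,j,k) ≼ f is a chain (i.e. any two of its elements are comparable under ≼) if and only if j = 0; moreover, for j = 0 this set equals {(0,0,q) : q ∈ P, q ≤ k}, which has exactly k+1 elements, with greatest element (0,0,0) and least element (0,0,k). (Claims in the proof of Lemma 2.2.) -/
/-- The set `↑_≼ (j,j,k)` of idempotents `f` of `B_ω^𝓕` lying above the idempotent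
`(j,j,k)` in the natural partial order `e ≼ f ↔ e·f = f·e = e`. -/
def upIdem (P : Set ℕ) (j k : ℕ) : Set (ℕ × ℕ × ℕ) :=
  {f | f ∈ BF P ∧ bmul f f = f ∧
    bmul (j, j, k) f = (j, j, k) ∧ bmul f (j, j, k) = (j, j, k)}

lemma mem_of_le' {P : Set ℕ} (hP : OmegaClosed P) (h0 : 0 ∈ P) {k : ℕ} (hkP : k ∈ P)
    {q : ℕ} (hq : q ≤ k) : q ∈ P := by
  have h := hP 0 h0 k hkP (k - q)
  have he : max 0 (k - (k - q)) = q := by omega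
  rwa [he] at h

lemma upIdem_mem {P : Set ℕ} {j k : ℕ} {a b p : ℕ} :
    (a, b, p) ∈ upIdem P j k ↔ p ∈ P ∧ a = b ∧ a ≤ j ∧ p ≤ k + (j - a) := by
  simp only [upIdem, BF, bmul, Set.mem_setOf_eq, Prod.mk.injEq]
  constructor
  · rintro ⟨hp, ⟨h1, h2, h3⟩, ⟨h4, h5, h6⟩, ⟨h7, h8, h9⟩⟩
    exact ⟨hp, by omega, by omega, by omega⟩
  · rintro ⟨hp, rfl, hle, hpk⟩
    exact ⟨hp, ⟨by omega, by omega, by omega⟩, ⟨by omega, by omega, by omega⟩,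
      ⟨by omega, by omega, by omega⟩⟩

/-- Claims in the proof of **Lemma 2.2**: for `P` ω-closed with `0 ∈ P` and `k ∈ P`,
`k ≥ 2`, the set of idempotents above `(j,j,k)` in the natural partial order is a chain
iff `j = 0`; moreover for `j = 0` this set equals `{(0,0,q) : q ∈ P, q ≤ k}`, has exactly
`k+1` elements, and has greatest element `(0,0,0)` and least element `(0,0,k)`. -/
theorem upIdem_chain_iff_and_description (P : Set ℕ) (hP : OmegaClosed P) (h0 : 0 ∈ P)
    (k : ℕ) (hk : 2 ≤ k) (hkP : k ∈ P) (j : ℕ) :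
    (IsChain (fun a b : ℕ × ℕ × ℕ => bmul a b = a ∧ bmul b a = a) (upIdem P j k) ↔
      j = 0) ∧
    upIdem P 0 k = {x : ℕ × ℕ × ℕ | ∃ q ∈ P, q ≤ k ∧ x = (0, 0, q)} ∧
    (upIdem P 0 k).ncard = k + 1 ∧
    ((0, 0, 0) : ℕ × ℕ × ℕ) ∈ upIdem P 0 k ∧
    ((0, 0, k) : ℕ × ℕ × ℕ) ∈ upIdem P 0 k ∧
    (∀ f ∈ upIdem P 0 k, bmul f (0, 0, 0) = f ∧ bmul (0, 0, 0) f = f) ∧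
    (∀ f ∈ upIdem P 0 k,
      bmul (0, 0, k) f = ((0, 0, k) : ℕ × ℕ × ℕ) ∧
      bmul f (0, 0, k) = ((0, 0, k) : ℕ × ℕ × ℕ)) := by
  have hall : ∀ q ≤ k, q ∈ P := fun q hq => mem_of_le' hP h0 hkP hq
  have hdesc : upIdem P 0 k = {x : ℕ × ℕ × ℕ | ∃ q ∈ P, q ≤ k ∧ x = (0, 0, q)} := by
    ext ⟨a, b, p⟩
    rw [upIdem_mem]
    constructor
    · rintro ⟨hp, rfl, ha, hpk⟩
      have : a = 0 := by omega
      subst this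
      exact ⟨p, hp, by omega, rfl⟩
    · rintro ⟨q, hq, hqk, heq⟩
      obtain ⟨rfl, rfl, rfl⟩ : a = 0 ∧ b = 0 ∧ p = q := by
        simpa [Prod.ext_iff] using heq
      exact ⟨hq, rfl, le_refl 0, by omega⟩
  refine ⟨?_, hdesc, ?_, ?_, ?_, ?_, ?_⟩
  · constructor
    · intro hchain
      by_contra hj
      have hj1 : 1 ≤ j := by omega
      have hf1 : ((j, j, 0) : ℕ × ℕ × ℕ) ∈ upIdem P j k := by
        rw [upIdem_mem]; exact ⟨h0, rfl, le_refl j, by omega⟩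
      have hf2 : ((j - 1, j - 1, k) : ℕ × ℕ × ℕ) ∈ upIdem P j k := by
        rw [upIdem_mem]; exact ⟨hkP, rfl, by omega, by omega⟩
      have hne : ((j, j, 0) : ℕ × ℕ × ℕ) ≠ (j - 1, j - 1, k) := by
        simp only [ne_eq, Prod.mk.injEq, not_and]; omega
      rcases hchain hf1 hf2 hne with ⟨h, _⟩ | ⟨h, _⟩ <;>
        · simp only [bmul, Prod.mk.injEq] at h; omega
    · rintro rfl
      rintro ⟨a, b, p⟩ ha ⟨c, d, q⟩ hb hne
      rw [upIdem_mem] at ha hb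
      obtain ⟨hp, rfl, ha0, hpk⟩ := ha
      obtain ⟨hq, rfl, hc0, hqk⟩ := hb
      have ha0 : a = 0 := by omega
      have hc0 : c = 0 := by omega
      subst ha0; subst hc0
      rcases le_total p q with h | h
      · right
        constructor <;> · simp only [bmul, Prod.mk.injEq, true_and, and_true]; omega
      · left
        constructor <;> · simp only [bmul, Prod.mk.injEq, true_and, and_true]; omega
  · rw [hdesc]
    have : {x : ℕ × ℕ × ℕ | ∃ q ∈ P, q ≤ k ∧ x = (0, 0, q)} =
        ↑((Finset.range (k + 1)).image (fun q => ((0 : ℕ), (0 : ℕ), q))) := by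
      ext x
      simp only [Set.mem_setOf_eq, Finset.coe_image, Set.mem_image, Finset.mem_coe,
        Finset.mem_range]
      constructor
      · rintro ⟨q, hq, hqk, rfl⟩; exact ⟨q, by omega, rfl⟩
      · rintro ⟨q, hq, rfl⟩; exact ⟨q, hall q (by omega), by omega, rfl⟩
    rw [this, Set.ncard_coe_finset, Finset.card_image_of_injective _ (by
      intro x y h; simpa [Prod.ext_iff] using h), Finset.card_range]
  · rw [upIdem_mem]; exact ⟨h0, rfl, le_refl 0, by omega⟩
  · rw [upIdem_mem]; exact ⟨hkP, rfl, le_refl 0, by omega⟩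
  · rintro ⟨a, b, p⟩ hf
    rw [upIdem_mem] at hf
    obtain ⟨hp, rfl, ha0, hpk⟩ := hf
    have : a = 0 := by omega
    subst this
    constructor <;> · simp only [bmul, Prod.mk.injEq, true_and, and_true]; omega
  · rintro ⟨a, b, p⟩ hf
    rw [upIdem_mem] at hf
    obtain ⟨hp, rfl, ha0, hpk⟩ := hf
    have : a = 0 := by omega
    subst this
    constructor <;> · simp only [bmul, Prod.mk.injEq, true_and, and_true]; omega
end

section
/- Let ε be an injective endomorphism of the bicyclic semigroup B_ω. If ε(i,i) = (i,i) for some idempotent (i,i) ∈ B_ω with i ≥ 1, then ε(k,k) = (k,k) for all k = 0, 1, …, i. (Intermediate claim in the proof of Proposition 2.6; it follows since the set of idempotents above (i,i) in the natural partial order e ≼ f ⇔ e·f = f·e = e is the chain {(k,k) : k ≤ i}, which an injective homomorphism must fix pointwise once its least element is fixed.) -/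
/-- Intermediate claim in the proof of **Proposition 2.6**: if an injective endomorphism
`ε` of the bicyclic semigroup `B_ω` fixes an idempotent `(i,i)` with `i ≥ 1`, then it
fixes every idempotent `(k,k)` with `k ≤ i`. -/
theorem bicyclic_fixes_chain_below (ε : ℕ × ℕ → ℕ × ℕ)
    (hend : IsBiEndo ε) (hinj : Function.Injective ε)
    (i : ℕ) (hi : 1 ≤ i) (hfix : ε (i, i) = (i, i)) :
    ∀ k : ℕ, k ≤ i → ε (k, k) = (k, k) := by
  set m : ℕ → ℕ := fun k => (ε (k, k)).1 with hm
  -- ε (k,k) is an idempotent, hence diagonal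
  have hdiag : ∀ k : ℕ, ε (k, k) = (m k, m k) := by
    intro k
    have h := hend (k, k) (k, k)
    simp only [bimul, Nat.sub_self, Nat.add_zero] at h
    have h1 := congrArg Prod.fst h
    have h2 := congrArg Prod.snd h
    simp only at h1 h2
    have h3 : (ε (k, k)).2 = (ε (k, k)).1 := by omega
    rw [Prod.ext_iff]
    exact ⟨rfl, h3⟩
  -- monotone
  have hmono : ∀ k l : ℕ, k ≤ l → m k ≤ m l := by
    intro k l hkl
    have h := hend (k, k) (l, l)
    rw [hdiag k, hdiag l] at h
    have hb : bimul (k, k) (l, l) = (l, l) := by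
      simp only [bimul]
      ext <;> simp <;> omega
    rw [hb, hdiag l] at h
    have h2 := congrArg Prod.snd h
    simp only [bimul] at h2
    omega
  -- injective
  have hminj : ∀ k l : ℕ, m k = m l → k = l := by
    intro k l h
    have : ε (k, k) = ε (l, l) := by rw [hdiag k, hdiag l, h]
    have := hinj this
    exact (Prod.ext_iff.1 this).1
  -- strictly increasing: m k + d ≤ m (k + d)
  have hstrict : ∀ d k : ℕ, m k + d ≤ m (k + d) := by
    intro d
    induction d with
    | zero => intro k; simp
    | succ d ih =>
      intro k
      have h1 := ih k
      have h2 := hmono (k + d) (k + d + 1) (by omega)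
      have h3 : m (k + d) ≠ m (k + d + 1) := fun h => by
        have := hminj _ _ h; omega
      have : k + (d + 1) = k + d + 1 := by omega
      rw [this]
      omega
  intro k hk
  have h1 := hstrict k 0
  have h2 := hstrict (i - k) k
  have hmi : m i = i := by
    have := congrArg Prod.fst hfix
    simpa [hm] using this
  rw [show k + (i - k) = i by omega, hmi] at h2
  have h0 : m 0 ≥ 0 := Nat.zero_le _
  simp only [Nat.zero_add] at h1
  have hk' : m k = k := by omega
  rw [hdiag k, hk']
end
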